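/- arXiv:1305.1379 — 3 statements merged into one kernel-verified Lean document; each statement's English description precedes it below -/
import Mathlib

section
/- (Alexander's trick.) Let D = {z ∈ ℂ : |z| ≤ 1} be the closed unit disk and let h : D → D be a homeomorphism with h(x) = x for every x ∈ D with |x| = 1. Then h is isotopic to the identity rel boundary: there exists a continuous map F : [0,1] × D → D such that F(0,·) = h, F(1,·) = id, F(t,·) : D → D is a homeomorphism for every t ∈ [0,1], and F(t,x) = x for every t ∈ [0,1] and every x with |x| = 1. -/
open unitInterval

namespace AlexanderTrick

open scoped Classical

noncomputable section

abbrev D : Set ℂ := Metric.closedBall (0 : ℂ) 1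

lemma mem_D_iff {z : ℂ} : z ∈ D ↔ ‖z‖ ≤ 1 := by
  simp [Metric.mem_closedBall, Complex.dist_eq]

lemma abs_real_smul (s : ℝ) (z : ℂ) : ‖s • z‖ = |s| * ‖z‖ := by
  rw [norm_smul, Real.norm_eq_abs]

def Bd (k : Homeomorph D D) : Prop := ∀ x : D, ‖x.val‖ = 1 → k x = x

lemma Bd.symm {k : Homeomorph D D} (hk : Bd k) : Bd k.symm := fun x hx => by
  conv_lhs => rw [← hk x hx]
  exact k.symm_apply_apply x

noncomputable def E (k : Homeomorph D D) (z : ℂ) : ℂ :=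
  if hz : z ∈ D then (k ⟨z, hz⟩ : ℂ) else z

lemma E_mem (k : Homeomorph D D) {z : ℂ} (hz : z ∈ D) : E k z ∈ D := by
  rw [E, dif_pos hz]; exact (k ⟨z, hz⟩).2

lemma E_bd {k : Homeomorph D D} (hk : Bd k) {z : ℂ} (hz : ‖z‖ = 1) : E k z = z := by
  have hzD : z ∈ D := mem_D_iff.mpr hz.le
  rw [E, dif_pos hzD, hk ⟨z, hzD⟩ hz]

lemma E_symm_apply {k : Homeomorph D D} {z : ℂ} (hz : z ∈ D) :
    E k.symm (E k z) = z := by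
  have h1 : E k z ∈ D := E_mem k hz
  rw [E, dif_pos h1]
  have h2 : (⟨E k z, h1⟩ : D) = k ⟨z, hz⟩ := by
    apply Subtype.ext
    show E k z = ((k ⟨z, hz⟩ : D) : ℂ)
    exact dif_pos hz
  rw [h2, k.symm_apply_apply]

lemma E_cont {k : Homeomorph D D} (hk : Bd k) : Continuous (E k) := by
  have hD : IsClosed D := Metric.isClosed_closedBall
  have h1 : ContinuousOn (E k) D := by
    rw [continuousOn_iff_continuous_restrict]
    have : Set.restrict D (E k) = fun x : D => (k x : ℂ) := by
      funext x
      exact dif_pos x.2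
    exact (congrArg Continuous this).mpr (continuous_subtype_val.comp k.continuous)
  have key : Continuous fun z : ℂ => if z ∈ D then E k z else z := by
    apply continuous_if
    · intro a ha
      have h2 : ‖a‖ = 1 := by
        have : a ∈ frontier D := by
          rwa [show {x : ℂ | x ∈ D} = D from rfl] at ha
        rw [frontier_closedBall (0 : ℂ) one_ne_zero] at this
        simpa [Complex.dist_eq] using this
      rw [E_bd hk h2]
    · rwa [show closure {x : ℂ | x ∈ D} = D from hD.closure_eq]
    · exact continuousOn_id
  have : (fun z : ℂ => if z ∈ D then E k z else z) = E k := by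
    funext z
    by_cases hz : z ∈ D
    · rw [if_pos hz]
    · rw [if_neg hz, E, dif_neg hz]
  rwa [this] at key

noncomputable def G (k : Homeomorph D D) : ℝ × ℂ → ℂ :=
  fun p => if ‖p.2‖ ≤ p.1 then p.1 • E k (p.1⁻¹ • p.2) else p.2

lemma arg_mem {s : ℝ} {z : ℂ} (hp : ‖z‖ ≤ s) : s⁻¹ • z ∈ D := by
  rcases eq_or_lt_of_le ((norm_nonneg z).trans hp) with h0 | h0
  · have : z = 0 := by
      have h1 := norm_nonneg z
      have : ‖z‖ = 0 := le_antisymm (hp.trans h0.symm.le) h1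
      exact norm_eq_zero.mp this
    simp [this, mem_D_iff]
  · rw [mem_D_iff, abs_real_smul, abs_inv, abs_of_pos h0]
    rw [inv_mul_le_iff₀ h0, mul_one]
    exact hp

lemma G_pos {k : Homeomorph D D} {s : ℝ} {z : ℂ} (hc : ‖z‖ ≤ s) :
    G k (s, z) = s • E k (s⁻¹ • z) := if_pos hc

lemma G_neg {k : Homeomorph D D} {s : ℝ} {z : ℂ} (hc : ¬ ‖z‖ ≤ s) :
    G k (s, z) = z := if_neg hc

lemma G_mem {k : Homeomorph D D} {s : ℝ} {z : ℂ} (h1 : s ≤ 1) (h2 : z ∈ D) :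
    G k (s, z) ∈ D := by
  by_cases hc : ‖z‖ ≤ s
  · rw [G_pos hc]
    have h0 : 0 ≤ s := (norm_nonneg z).trans hc
    rw [mem_D_iff, abs_real_smul, abs_of_nonneg h0]
    calc s * ‖E k (s⁻¹ • z)‖ ≤ s * 1 := by
          exact mul_le_mul_of_nonneg_left
            (mem_D_iff.mp (E_mem k (arg_mem hc))) h0
      _ ≤ 1 := by simpa using h1
  · rw [G_neg hc]; exact h2

lemma G_bd {k : Homeomorph D D} (hk : Bd k) {s : ℝ} {z : ℂ} (hs : s ≤ 1)
    (hz : ‖z‖ = 1) : G k (s, z) = z := by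
  by_cases hc : ‖z‖ ≤ s
  · rw [G_pos hc]
    have hs1 : s = 1 := le_antisymm hs (by rw [← hz]; exact hc)
    simp only [hs1, inv_one, one_smul]
    rw [E_bd hk hz]
  · exact G_neg hc

lemma G_one {k : Homeomorph D D} {z : ℂ} (hz : z ∈ D) : G k (1, z) = E k z := by
  rw [G_pos (mem_D_iff.mp hz)]
  simp

lemma G_zero {k : Homeomorph D D} (z : ℂ) : G k (0, z) = z := by
  by_cases hc : ‖z‖ ≤ 0
  · have h2 : z = 0 := norm_eq_zero.mp
      (le_antisymm hc (norm_nonneg z))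
    rw [G_pos hc, zero_smul]
    exact h2.symm
  · exact G_neg hc

set_option maxHeartbeats 1000000 in
lemma G_inv {k : Homeomorph D D} (hk : Bd k) (s : ℝ) (z : ℂ) :
    G k.symm (s, G k (s, z)) = z := by
  by_cases hc : ‖z‖ ≤ s
  · have h0 : 0 ≤ s := (norm_nonneg z).trans hc
    rcases eq_or_lt_of_le h0 with h0' | h0'
    · have hz0 : z = 0 := norm_eq_zero.mp
        (le_antisymm (hc.trans h0'.symm.le) (norm_nonneg z))
      subst hz0
      rw [← h0', G_zero, G_zero]
    · have hw : s⁻¹ • z ∈ D := arg_mem hc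
      have hGk : G k (s, z) = s • E k (s⁻¹ • z) := G_pos hc
      have habs : ‖G k (s, z)‖ ≤ s := by
        rw [hGk, abs_real_smul, abs_of_pos h0']
        calc s * ‖E k (s⁻¹ • z)‖ ≤ s * 1 :=
              mul_le_mul_of_nonneg_left (mem_D_iff.mp (E_mem k hw)) h0'.le
          _ = s := mul_one s
      rw [G_pos (k := k.symm) habs, hGk]
      rw [smul_smul, inv_mul_cancel₀ h0'.ne', one_smul, E_symm_apply hw,
        smul_smul, mul_inv_cancel₀ h0'.ne', one_smul]
  · rw [G_neg hc, G_neg (k := k.symm) hc]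

set_option maxHeartbeats 1000000 in
lemma G_cont {k : Homeomorph D D} (hk : Bd k) : Continuous (G k) := by
  set A : Set (ℝ × ℂ) := {p | ‖p.2‖ ≤ p.1} with hA
  have hAc : IsClosed A :=
    isClosed_le (continuous_norm.comp continuous_snd) continuous_fst
  have hf1 : ContinuousOn (fun p : ℝ × ℂ => p.1 • E k (p.1⁻¹ • p.2)) A := by
    intro p hp
    by_cases hp1 : p.1 = 0
    · -- p.2 = 0 here
      have hp2 : p.2 = 0 := norm_eq_zero.mp
        (le_antisymm (by rw [← hp1]; exact hp) (norm_nonneg p.2))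
      have hval : p.1 • E k (p.1⁻¹ • p.2) = 0 := by rw [hp1, zero_smul]
      rw [ContinuousWithinAt, hval]
      apply squeeze_zero_norm' (a := fun q : ℝ × ℂ => q.1)
      · filter_upwards [self_mem_nhdsWithin] with q hq
        have h0 : 0 ≤ q.1 := (norm_nonneg q.2).trans hq
        have : ‖q.1 • E k (q.1⁻¹ • q.2)‖ ≤ q.1 := by
          rw [abs_real_smul, abs_of_nonneg h0]
          calc q.1 * ‖E k (q.1⁻¹ • q.2)‖ ≤ q.1 * 1 :=
                mul_le_mul_of_nonneg_left
                  (mem_D_iff.mp (E_mem k (arg_mem (s := q.1) (z := q.2) hq))) h0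
            _ = q.1 := mul_one q.1
        simpa using this
      · have : Filter.Tendsto (fun q : ℝ × ℂ => q.1) (nhds p) (nhds p.1) :=
          continuous_fst.tendsto p
        rw [hp1] at this
        exact this.mono_left nhdsWithin_le_nhds
    · apply ContinuousAt.continuousWithinAt
      exact continuousAt_fst.smul
        (((E_cont hk).continuousAt).comp ((continuousAt_fst.inv₀ hp1).smul continuousAt_snd))
  have key : Continuous fun p : ℝ × ℂ =>
      if ‖p.2‖ ≤ p.1 then p.1 • E k (p.1⁻¹ • p.2) else p.2 := by
    apply continuous_if
    · intro a ha
      have haA : a ∈ A := by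
        have := ha.1
        rw [hAc.closure_eq] at this
        exact this
      have h3 : a.1 ≤ ‖a.2‖ := by
        by_contra hlt
        have hopen : IsOpen {x : ℝ × ℂ | ‖x.2‖ < x.1} :=
          isOpen_lt (continuous_norm.comp continuous_snd) continuous_fst
        have hsub : {x : ℝ × ℂ | ‖x.2‖ < x.1} ⊆ interior A := by
          apply interior_maximal _ hopen
          intro x hx
          show ‖x.2‖ ≤ x.1
          exact le_of_lt hx
        exact ha.2 (hsub (not_le.mp hlt))
      have heq : ‖a.2‖ = a.1 := le_antisymm haA h3
      by_cases ha1 : a.1 = 0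
      · have : a.2 = 0 := norm_eq_zero.mp (by rw [heq, ha1])
        simp [ha1, this]
      · have h0 : 0 < a.1 := lt_of_le_of_ne ((norm_nonneg a.2).trans haA)
          (Ne.symm ha1)
        have : ‖a.1⁻¹ • a.2‖ = 1 := by
          rw [abs_real_smul, abs_inv, abs_of_pos h0, heq, inv_mul_cancel₀ h0.ne']
        rw [E_bd hk this, smul_smul, mul_inv_cancel₀ h0.ne', one_smul]
    · rwa [hAc.closure_eq]
    · exact continuous_snd.continuousOn
  exact key

end

end AlexanderTrick

/-- Alexander's trick: a homeomorphism of the closed unit disk fixing the boundary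
circle pointwise is isotopic to the identity rel boundary. -/
theorem alexander_trick
    (h : Homeomorph (Metric.closedBall (0 : ℂ) 1) (Metric.closedBall (0 : ℂ) 1))
    (hbd : ∀ x : Metric.closedBall (0 : ℂ) 1, ‖x.val‖ = 1 → h x = x) :
    ∃ F : I × Metric.closedBall (0 : ℂ) 1 → Metric.closedBall (0 : ℂ) 1,
      Continuous F ∧
      (∀ x, F (0, x) = h x) ∧
      (∀ x, F (1, x) = x) ∧
      (∀ t : I, IsHomeomorph fun x => F (t, x)) ∧
      (∀ (t : I) (x : Metric.closedBall (0 : ℂ) 1),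
        ‖x.val‖ = 1 → F (t, x) = x) := by
  have hk : AlexanderTrick.Bd h := hbd
  haveI : CompactSpace (Metric.closedBall (0 : ℂ) 1) :=
    isCompact_iff_compactSpace.mp (isCompact_closedBall (0 : ℂ) 1)
  have hs1 : ∀ t : I, (1 - (t : ℝ)) ≤ 1 := fun t => by
    have := t.2.1; linarith
  refine ⟨fun p => ⟨AlexanderTrick.G h (1 - (p.1 : ℝ), (p.2 : ℂ)),
      AlexanderTrick.G_mem (hs1 p.1) p.2.2⟩, ?_, ?_, ?_, ?_, ?_⟩
  · apply Continuous.subtype_mk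
    exact (AlexanderTrick.G_cont hk).comp
      ((continuous_const.sub (continuous_subtype_val.comp continuous_fst)).prodMk
        (continuous_subtype_val.comp continuous_snd))
  · intro x
    apply Subtype.ext
    show AlexanderTrick.G h (1 - ((0 : I) : ℝ), (x : ℂ)) = (h x : ℂ)
    rw [show ((0 : I) : ℝ) = 0 from rfl, sub_zero, AlexanderTrick.G_one x.2]
    exact dif_pos x.2
  · intro x
    apply Subtype.ext
    show AlexanderTrick.G h (1 - ((1 : I) : ℝ), (x : ℂ)) = (x : ℂ)
    rw [show ((1 : I) : ℝ) = 1 from rfl, sub_self]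
    exact AlexanderTrick.G_zero _
  · intro t
    rw [isHomeomorph_iff_continuous_bijective]
    constructor
    · apply Continuous.subtype_mk
      show Continuous fun x : Metric.closedBall (0 : ℂ) 1 =>
        AlexanderTrick.G h (1 - (t : ℝ), (x : ℂ))
      exact (AlexanderTrick.G_cont hk).comp
        (continuous_const.prodMk continuous_subtype_val)
    · apply Function.bijective_iff_has_inverse.mpr
      refine ⟨fun x => ⟨AlexanderTrick.G h.symm (1 - (t : ℝ), (x : ℂ)),
        AlexanderTrick.G_mem (hs1 t) x.2⟩, ?_, ?_⟩
      · intro x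
        apply Subtype.ext
        exact AlexanderTrick.G_inv hk _ _
      · intro x
        apply Subtype.ext
        have := AlexanderTrick.G_inv hk.symm (1 - (t : ℝ)) (x : ℂ)
        rwa [Homeomorph.symm_symm] at this
  · intro t x hx
    apply Subtype.ext
    exact AlexanderTrick.G_bd hk (hs1 t) hx
end

section
/- Every orientation-preserving homeomorphism of the closed disk is isotopic to the identity: let D = {z ∈ ℂ : |z| ≤ 1} and let h : D → D be a homeomorphism mapping the unit circle {|z| = 1} onto itself, whose boundary restriction is orientation preserving in the sense that there is a continuous strictly increasing map H : ℝ → ℝ with H(x+1) = H(x)+1 and h(exp(2πix)) = exp(2πi H(x)) for all x ∈ ℝ. Then there exists a continuous map F : [0,1] × D → D such that F(0,·) = h, F(1,·) = id, and F(t,·) : D → D is a homeomorphism for every t ∈ [0,1]. -/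
open unitInterval Real

noncomputable section
namespace AlexTrick

def Complex.abs : AbsoluteValue ℂ ℝ := IsAbsoluteValue.toAbsoluteValue (norm : ℂ → ℝ)

lemma Complex.norm_eq_abs (z : ℂ) : ‖z‖ = Complex.abs z := rfl

lemma Complex.abs_ofReal (r : ℝ) : Complex.abs (r : ℂ) = |r| :=
  show ‖(r : ℂ)‖ = |r| from by simp

lemma Complex.continuous_abs : Continuous Complex.abs :=
  show Continuous (fun z : ℂ => ‖z‖) from continuous_norm

lemma Complex.abs_exp_ofReal_mul_I (x : ℝ) : Complex.abs (Complex.exp (x * Complex.I)) = 1 :=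
  _root_.Complex.norm_exp_ofReal_mul_I x

lemma Complex.abs_mul_exp_arg_mul_I (z : ℂ) :
    ((Complex.abs z : ℝ) : ℂ) * Complex.exp (Complex.arg z * Complex.I) = z :=
  _root_.Complex.norm_mul_exp_arg_mul_I z

def eθ (x : ℝ) : ℂ := Complex.exp ((2 * π * x : ℝ) * Complex.I)

lemma abs_eθ (x : ℝ) : Complex.abs (eθ x) = 1 := Complex.abs_exp_ofReal_mul_I _

lemma continuous_eθ : Continuous eθ := by
  unfold eθ; fun_prop

lemma eθ_add (a b : ℝ) : eθ (a + b) = eθ a * eθ b := by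
  unfold eθ; rw [← Complex.exp_add]; push_cast; ring_nf

lemma eθ_int (a : ℝ) (k : ℤ) : eθ (a + k) = eθ a := by
  rw [eθ_add]
  have : eθ (k : ℝ) = 1 := by
    unfold eθ
    rw [show ((2 * π * (k:ℝ) : ℝ) : ℂ) * Complex.I = (k:ℂ) * (2 * π * Complex.I) by push_cast; ring]
    exact Complex.exp_int_mul_two_pi_mul_I k
  rw [this, mul_one]

lemma eθ_eq_int_diff {a b : ℝ} (h : eθ a = eθ b) : ∃ k : ℤ, a = b + k := by
  unfold eθ at h
  rw [Complex.exp_eq_exp_iff_exists_int] at h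
  obtain ⟨n, hn⟩ := h
  refine ⟨n, ?_⟩
  have him := congrArg Complex.im hn
  simp [Complex.mul_im, Complex.mul_re] at him
  have hπ := Real.pi_pos
  nlinarith [him]

lemma abs_mul_eθ_arg (z : ℂ) : (Complex.abs z : ℂ) * eθ (Complex.arg z / (2 * π)) = z := by
  have hπ : (2 * π : ℝ) ≠ 0 := by positivity
  unfold eθ
  rw [show (2 * π * (Complex.arg z / (2 * π)) : ℝ) = Complex.arg z by field_simp]
  exact Complex.abs_mul_exp_arg_mul_I z

lemma eθ_half : eθ (1/2) = -1 := by
  unfold eθ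
  rw [show ((2 * π * (1/2) : ℝ) : ℂ) * Complex.I = (π : ℂ) * Complex.I by push_cast; ring]
  exact Complex.exp_pi_mul_I

def Hs (H : ℝ → ℝ) (s y : ℝ) : ℝ := (1 - s) * H y + s * y

variable {H : ℝ → ℝ}

lemma H_int (Hper : ∀ x : ℝ, H (x + 1) = H x + 1) (y : ℝ) (k : ℤ) :
    H (y + k) = H y + k := by
  induction k using Int.induction_on with
  | zero => simp
  | succ n ih =>
      push_cast at ih ⊢
      have : y + ((n:ℝ) + 1) = (y + n) + 1 := by ring
      rw [this, Hper, ih]; ring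
  | pred n ih =>
      push_cast at ih ⊢
      have h1 : y + (-(n:ℝ) - 1) + 1 = y + (-(n:ℝ)) := by ring
      have h2 := Hper (y + (-(n:ℝ) - 1))
      rw [h1] at h2
      have h3 : y + -(n:ℝ) = y + -↑n := by ring
      rw [ih] at h2
      linarith

lemma Hs_int (Hper : ∀ x : ℝ, H (x + 1) = H x + 1) (s y : ℝ) (k : ℤ) :
    Hs H s (y + k) = Hs H s y + k := by
  unfold Hs
  rw [H_int Hper]
  ring

lemma Hs_strictMono (Hmono : StrictMono H) {s : ℝ} (h0 : 0 ≤ s) (h1 : s ≤ 1) :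
    StrictMono (Hs H s) := by
  intro a b hab
  have hH := Hmono hab
  unfold Hs
  rcases eq_or_lt_of_le h1 with h | h
  · subst h; simpa using hab
  · nlinarith [mul_nonneg h0 (sub_pos.2 hab).le]

lemma Hs_continuous (Hcont : Continuous H) :
    Continuous fun q : ℝ × ℝ => Hs H q.1 q.2 := by
  unfold Hs; fun_prop

lemma Hs_surjective (Hcont : Continuous H) (Hmono : StrictMono H)
    (Hper : ∀ x : ℝ, H (x + 1) = H x + 1) {s : ℝ} (h0 : 0 ≤ s) (h1 : s ≤ 1) :
    Function.Surjective (Hs H s) := by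
  have hc : Continuous (Hs H s) := by unfold Hs; fun_prop
  have hmono := (Hs_strictMono Hmono h0 h1).monotone
  apply hc.surjective
  · apply Filter.tendsto_atTop_mono (f := fun x : ℝ => Hs H s 0 + (x - 1)) (g := Hs H s)
    · intro x
      have h2 : Hs H s ((0:ℝ) + (⌊x⌋ : ℤ)) = Hs H s 0 + ⌊x⌋ := Hs_int Hper s 0 ⌊x⌋
      have h3 : Hs H s ((0:ℝ) + (⌊x⌋ : ℤ)) ≤ Hs H s x := by
        apply hmono; push_cast; linarith [Int.floor_le x]
      have h4 : (x : ℝ) - 1 ≤ (⌊x⌋ : ℝ) := by linarith [Int.sub_one_lt_floor x]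
      linarith
    · apply Filter.tendsto_atTop_add_const_left
      exact Filter.tendsto_atTop_add_const_right _ _ Filter.tendsto_id
  · apply Filter.tendsto_atBot_mono (f := fun x : ℝ => Hs H s 0 + (x + 1))
    · intro x
      have h2 : Hs H s ((0:ℝ) + (⌈x⌉ : ℤ)) = Hs H s 0 + ⌈x⌉ := Hs_int Hper s 0 ⌈x⌉
      have h3 : Hs H s x ≤ Hs H s ((0:ℝ) + (⌈x⌉ : ℤ)) := by
        apply hmono; push_cast; linarith [Int.le_ceil x]
      have h4 : (⌈x⌉ : ℝ) ≤ x + 1 := by linarith [Int.ceil_lt_add_one x]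
      linarith
    · apply Filter.tendsto_atBot_add_const_left
      exact Filter.tendsto_atBot_add_const_right _ _ Filter.tendsto_id


variable {H : ℝ → ℝ}

/-- The cone of the circle map induced by the lift `Hs H s`. -/
def Bf (H : ℝ → ℝ) (s : ℝ) (z : ℂ) : ℂ :=
  (Complex.abs z : ℂ) * eθ (Hs H s (Complex.arg z / (2 * π)))

lemma abs_Bf (s : ℝ) (z : ℂ) : Complex.abs (Bf H s z) = Complex.abs z := by
  unfold Bf
  rw [map_mul, abs_eθ, mul_one, Complex.abs_ofReal, abs_of_nonneg (Complex.abs.nonneg z)]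

lemma Bf_zero (s : ℝ) : Bf H s 0 = 0 := by
  unfold Bf; simp

/-- `Bf` can be computed from any lift `θ` of `z / |z|`. -/
lemma Bf_lift (Hper : ∀ x : ℝ, H (x + 1) = H x + 1) {s : ℝ} {z : ℂ} {θ : ℝ}
    (hz : z ≠ 0) (hθ : (Complex.abs z : ℂ) * eθ θ = z) :
    Bf H s z = (Complex.abs z : ℂ) * eθ (Hs H s θ) := by
  have habs : (Complex.abs z : ℂ) ≠ 0 := by
    simpa [Complex.ofReal_eq_zero] using (Complex.abs.ne_zero hz)
  have h1 : eθ (Complex.arg z / (2 * π)) = eθ θ := by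
    have := (abs_mul_eθ_arg z).trans hθ.symm
    exact mul_left_cancel₀ habs this
  obtain ⟨k, hk⟩ := eθ_eq_int_diff h1
  unfold Bf
  rw [hk, Hs_int Hper, eθ_int]

lemma Bf_one (z : ℂ) : Bf H 1 z = z := by
  unfold Bf Hs
  rw [show (1 - 1) * H (Complex.arg z / (2*π)) + 1 * (Complex.arg z / (2*π))
      = Complex.arg z / (2*π) by ring]
  exact abs_mul_eθ_arg z

lemma continuous_Bf (Hcont : Continuous H) (Hper : ∀ x : ℝ, H (x + 1) = H x + 1) :
    Continuous fun q : ℝ × ℂ => Bf H q.1 q.2 := by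
  rw [continuous_iff_continuousAt]
  rintro ⟨s₀, z₀⟩
  rcases eq_or_ne z₀ 0 with rfl | hz0
  · -- at z = 0 : squeeze
    have key : Filter.Tendsto (fun q : ℝ × ℂ => Bf H q.1 q.2) (nhds (s₀, 0)) (nhds 0) := by
      rw [tendsto_zero_iff_norm_tendsto_zero]
      apply squeeze_zero (g := fun q : ℝ × ℂ => Complex.abs q.2)
      · intro q; positivity
      · intro q
        exact le_of_eq (by rw [Complex.norm_eq_abs, abs_Bf])
      · have : Filter.Tendsto (fun q : ℝ × ℂ => Complex.abs q.2)
            (nhds (s₀, (0:ℂ))) (nhds (Complex.abs (0:ℂ))) :=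
          (Complex.continuous_abs.comp continuous_snd).continuousAt
        simpa using this
    have : (fun q : ℝ × ℂ => Bf H q.1 q.2) (s₀, 0) = 0 := Bf_zero s₀
    unfold ContinuousAt
    rw [this]
    exact key
  by_cases hsl : z₀ ∈ Complex.slitPlane
  · -- arg is continuous here
    have harg : ContinuousAt Complex.arg z₀ := Complex.continuousAt_arg hsl
    have h1 : ContinuousAt (fun q : ℝ × ℂ => Hs H q.1 (Complex.arg q.2 / (2 * π)))
        (s₀, z₀) := by
      have hin : ContinuousAt (fun q : ℝ × ℂ => ((q.1, Complex.arg q.2 / (2 * π)) : ℝ × ℝ))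
          (s₀, z₀) :=
        continuousAt_fst.prodMk ((harg.comp (f := Prod.snd) (x := (s₀, z₀)) continuousAt_snd).div₀ continuousAt_const
          (by positivity : (2 * π : ℝ) ≠ 0))
      exact ContinuousAt.comp (x := ((s₀, z₀) : ℝ × ℂ))
        ((Hs_continuous Hcont).continuousAt) hin
    exact ((Complex.continuous_abs.comp continuous_snd).continuousAt.ofReal.mul
      (continuous_eθ.continuousAt.comp h1))
  · -- z₀ is a negative real: use the shifted lift
    have him : z₀.im = 0 ∧ z₀.re ≤ 0 := by
      rw [Complex.mem_slitPlane_iff] at hsl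
      push_neg at hsl
      exact ⟨hsl.2, hsl.1⟩
    have hre : z₀.re < 0 := by
      rcases lt_or_eq_of_le him.2 with h | h
      · exact h
      · exfalso; exact hz0 (by apply Complex.ext <;> simp [him.1, ← h])
    -- alternate formula
    have key : ∀ z : ℂ, z ≠ 0 →
        (Complex.abs z : ℂ) * eθ (Complex.arg (-z) / (2 * π) + 1/2) = z := by
      intro z hz
      rw [eθ_add, eθ_half]
      have h2 : (Complex.abs (-z) : ℂ) * eθ (Complex.arg (-z) / (2 * π)) = -z :=
        abs_mul_eθ_arg (-z)
      rw [map_neg_eq_map] at h2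
      have habs : (Complex.abs z : ℂ) ≠ 0 := by
        simpa [Complex.ofReal_eq_zero] using (Complex.abs.ne_zero hz)
      calc (Complex.abs z : ℂ) * (eθ (Complex.arg (-z) / (2 * π)) * (-1))
          = -((Complex.abs z : ℂ) * eθ (Complex.arg (-z) / (2 * π))) := by ring
        _ = -(-z) := by rw [h2]
        _ = z := neg_neg z
    have hagree : ∀ q : ℝ × ℂ, q.2 ≠ 0 →
        Bf H q.1 q.2 = (Complex.abs q.2 : ℂ) *
          eθ (Hs H q.1 (Complex.arg (-q.2) / (2 * π) + 1/2)) := by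
      intro q hq
      exact Bf_lift Hper hq (key q.2 hq)
    have hne : {q : ℝ × ℂ | q.2 ≠ 0} ∈ nhds (s₀, z₀) := by
      have : IsOpen {q : ℝ × ℂ | q.2 ≠ 0} :=
        isOpen_compl_singleton.preimage continuous_snd
      exact this.mem_nhds hz0
    have heq : (fun q : ℝ × ℂ => (Complex.abs q.2 : ℂ) *
          eθ (Hs H q.1 (Complex.arg (-q.2) / (2 * π) + 1/2)))
        =ᶠ[nhds (s₀, z₀)] (fun q : ℝ × ℂ => Bf H q.1 q.2) := by
      filter_upwards [hne] with q hq
      exact (hagree q hq).symm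
    apply ContinuousAt.congr _ heq
    have hsl' : -z₀ ∈ Complex.slitPlane := by
      rw [Complex.mem_slitPlane_iff]
      left
      simpa using hre
    have harg : ContinuousAt (fun z : ℂ => Complex.arg (-z)) z₀ :=
      (Complex.continuousAt_arg hsl').comp (continuous_neg.continuousAt)
    have h1 : ContinuousAt
        (fun q : ℝ × ℂ => Hs H q.1 (Complex.arg (-q.2) / (2 * π) + 1/2)) (s₀, z₀) := by
      have hin : ContinuousAt
          (fun q : ℝ × ℂ => ((q.1, Complex.arg (-q.2) / (2 * π) + 1/2) : ℝ × ℝ))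
          (s₀, z₀) :=
        continuousAt_fst.prodMk (((harg.comp (f := Prod.snd) (x := (s₀, z₀)) continuousAt_snd).div₀ continuousAt_const
          (by positivity : (2 * π : ℝ) ≠ 0)).add continuousAt_const)
      exact ContinuousAt.comp (x := ((s₀, z₀) : ℝ × ℂ))
        ((Hs_continuous Hcont).continuousAt) hin
    exact ((Complex.continuous_abs.comp continuous_snd).continuousAt.ofReal.mul
      (continuous_eθ.continuousAt.comp h1))


lemma Bf_injective (Hmono : StrictMono H) (Hper : ∀ x : ℝ, H (x + 1) = H x + 1)
    {s : ℝ} (h0 : 0 ≤ s) (h1 : s ≤ 1) : Function.Injective (Bf H s) := by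
  intro z w hzw
  have habs : Complex.abs z = Complex.abs w := by
    rw [← abs_Bf (H := H) s z, ← abs_Bf (H := H) s w, hzw]
  rcases eq_or_ne z 0 with rfl | hz
  · have : Complex.abs w = 0 := by rw [← habs]; simp
    exact (Complex.abs.eq_zero.mp this).symm
  have hw : w ≠ 0 := by
    intro hw0
    rw [hw0] at habs
    simp at habs
    exact hz habs
  have hZ : (Complex.abs z : ℂ) ≠ 0 := by
    simpa [Complex.ofReal_eq_zero] using (Complex.abs.ne_zero hz)
  unfold Bf at hzw
  rw [habs] at hzw
  have hW : (Complex.abs w : ℂ) ≠ 0 := by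
    simpa [Complex.ofReal_eq_zero] using (Complex.abs.ne_zero hw)
  have he : eθ (Hs H s (Complex.arg z / (2 * π))) =
      eθ (Hs H s (Complex.arg w / (2 * π))) := mul_left_cancel₀ hW hzw
  obtain ⟨k, hk⟩ := eθ_eq_int_diff he
  rw [← Hs_int Hper] at hk
  have hθ : Complex.arg z / (2 * π) = Complex.arg w / (2 * π) + k :=
    (Hs_strictMono Hmono h0 h1).injective hk
  have : eθ (Complex.arg z / (2 * π)) = eθ (Complex.arg w / (2 * π)) := by
    rw [hθ, eθ_int]
  calc z = (Complex.abs z : ℂ) * eθ (Complex.arg z / (2 * π)) := (abs_mul_eθ_arg z).symm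
    _ = (Complex.abs w : ℂ) * eθ (Complex.arg w / (2 * π)) := by rw [habs, this]
    _ = w := abs_mul_eθ_arg w

lemma Bf_surj (Hcont : Continuous H) (Hmono : StrictMono H)
    (Hper : ∀ x : ℝ, H (x + 1) = H x + 1) {s : ℝ} (h0 : 0 ≤ s) (h1 : s ≤ 1)
    (w : ℂ) : ∃ z : ℂ, Complex.abs z = Complex.abs w ∧ Bf H s z = w := by
  rcases eq_or_ne w 0 with rfl | hw
  · exact ⟨0, rfl, Bf_zero s⟩
  obtain ⟨θ, hθ⟩ := Hs_surjective Hcont Hmono Hper h0 h1 (Complex.arg w / (2 * π))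
  refine ⟨(Complex.abs w : ℂ) * eθ θ, ?_, ?_⟩
  · rw [map_mul, abs_eθ, mul_one, Complex.abs_ofReal, abs_of_nonneg (Complex.abs.nonneg w)]
  · set z : ℂ := (Complex.abs w : ℂ) * eθ θ with hzdef
    have habsz : Complex.abs z = Complex.abs w := by
      rw [hzdef, map_mul, abs_eθ, mul_one, Complex.abs_ofReal,
        abs_of_nonneg (Complex.abs.nonneg w)]
    have hz : z ≠ 0 := by
      rw [← Complex.abs.ne_zero_iff, habsz]
      exact Complex.abs.ne_zero hw
    have hlift : (Complex.abs z : ℂ) * eθ θ = z := by rw [habsz]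
    rw [Bf_lift Hper hz hlift, habsz, hθ]
    exact abs_mul_eθ_arg w


/-- The Alexander map: rescaled `f` inside radius `s`, cone of the boundary map outside. -/
def Af (f : ℂ → ℂ) (s : ℝ) (z : ℂ) : ℂ :=
  ((max s (Complex.abs z) : ℝ) : ℂ) * f (z / ((max s (Complex.abs z) : ℝ) : ℂ))

variable {f : ℂ → ℂ}

lemma Af_outer (Hper : ∀ x : ℝ, H (x + 1) = H x + 1)
    (flift : ∀ x : ℝ, f (eθ x) = eθ (H x))
    {s : ℝ} {z : ℂ} (hz : z ≠ 0) (hsz : s ≤ Complex.abs z) :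
    Af f s z = Bf H 0 z := by
  have habs : (Complex.abs z : ℂ) ≠ 0 := by
    simpa [Complex.ofReal_eq_zero] using (Complex.abs.ne_zero hz)
  have hmax : max s (Complex.abs z) = Complex.abs z := max_eq_right hsz
  have hdiv : z / ((Complex.abs z : ℝ) : ℂ) = eθ (Complex.arg z / (2 * π)) := by
    rw [div_eq_iff habs, mul_comm]
    exact (abs_mul_eθ_arg z).symm
  unfold Af
  rw [hmax, hdiv, flift]
  unfold Bf
  congr 2
  unfold Hs
  ring

lemma Af_zero_eq (Hper : ∀ x : ℝ, H (x + 1) = H x + 1)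
    (flift : ∀ x : ℝ, f (eθ x) = eθ (H x)) (z : ℂ) :
    Af f 0 z = Bf H 0 z := by
  rcases eq_or_ne z 0 with rfl | hz
  · unfold Af
    rw [Bf_zero]
    rw [show Complex.abs 0 = 0 from map_zero _]
    norm_num
  · exact Af_outer Hper flift hz (Complex.abs.nonneg z)

lemma Af_one {z : ℂ} (hz : Complex.abs z ≤ 1) : Af f 1 z = f z := by
  unfold Af
  rw [max_eq_left hz]
  simp

lemma abs_Af (fbound : ∀ z, Complex.abs (f z) ≤ 1) {s : ℝ} (h0 : 0 ≤ s) (z : ℂ) :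
    Complex.abs (Af f s z) ≤ max s (Complex.abs z) := by
  unfold Af
  rw [map_mul, Complex.abs_ofReal,
    abs_of_nonneg (le_max_of_le_left h0)]
  calc max s (Complex.abs z) * Complex.abs (f _) ≤ max s (Complex.abs z) * 1 := by
        apply mul_le_mul_of_nonneg_left (fbound _) (le_max_of_le_left h0)
    _ = max s (Complex.abs z) := mul_one _

lemma continuous_Af (fcont : Continuous f) (fbound : ∀ z, Complex.abs (f z) ≤ 1) :
    Continuous fun q : ℝ × ℂ => Af f (max q.1 0) q.2 := by
  rw [continuous_iff_continuousAt]
  rintro ⟨s₀, z₀⟩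
  have hMcont : Continuous fun q : ℝ × ℂ => max (max q.1 0) (Complex.abs q.2) :=
    (continuous_fst.max continuous_const).max (Complex.continuous_abs.comp continuous_snd)
  rcases eq_or_lt_of_le (by positivity : (0:ℝ) ≤ max (max s₀ 0) (Complex.abs z₀)) with hM | hM
  · -- degenerate point: value 0, squeeze
    have hz0 : z₀ = 0 := by
      have : Complex.abs z₀ ≤ 0 := le_of_le_of_eq (le_max_right _ _) hM.symm
      exact Complex.abs.eq_zero.mp (le_antisymm this (Complex.abs.nonneg _))
    have hval : Af f (max s₀ 0) z₀ = 0 := by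
      unfold Af
      rw [hz0] at hM ⊢
      rw [← hM]
      simp
    unfold ContinuousAt
    rw [show (fun q : ℝ × ℂ => Af f (max q.1 0) q.2) (s₀, z₀) = 0 from hval]
    rw [tendsto_zero_iff_norm_tendsto_zero]
    apply squeeze_zero (g := fun q : ℝ × ℂ => max (max q.1 0) (Complex.abs q.2))
    · intro q; positivity
    · intro q
      have h0q : (0:ℝ) ≤ max q.1 0 := le_max_right _ _
      simpa [Complex.norm_eq_abs] using abs_Af fbound h0q q.2
    · convert hMcont.tendsto (s₀, z₀) using 2
  · -- nondegenerate: direct composition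
    have hMne : ((max (max s₀ 0) (Complex.abs z₀) : ℝ) : ℂ) ≠ 0 := by
      simpa [Complex.ofReal_eq_zero] using ne_of_gt hM
    apply ContinuousAt.mul
    · exact (hMcont.continuousAt).ofReal
    · apply fcont.continuousAt.comp
      exact continuousAt_snd.div (hMcont.continuousAt.ofReal) hMne

lemma Af_inner {s : ℝ} (hs : 0 < s) {z : ℂ} (hzs : Complex.abs z ≤ s) :
    Af f s z = (s : ℂ) * f (z / (s : ℂ)) := by
  unfold Af
  rw [max_eq_left hzs]

lemma abs_Af_inner (fbound : ∀ z, Complex.abs (f z) ≤ 1) {s : ℝ} (hs : 0 < s)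
    {z : ℂ} (hzs : Complex.abs z ≤ s) : Complex.abs (Af f s z) ≤ s := by
  calc Complex.abs (Af f s z) ≤ max s (Complex.abs z) := abs_Af fbound hs.le z
    _ = s := max_eq_left hzs

lemma Af_injective (Hmono : StrictMono H) (Hper : ∀ x : ℝ, H (x + 1) = H x + 1)
    (flift : ∀ x : ℝ, f (eθ x) = eθ (H x))
    (fbound : ∀ z, Complex.abs (f z) ≤ 1)
    (fcirc : ∀ z, Complex.abs z ≤ 1 → (Complex.abs (f z) = 1 ↔ Complex.abs z = 1))
    (finj : ∀ z w, Complex.abs z ≤ 1 → Complex.abs w ≤ 1 → f z = f w → z = w)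
    {s : ℝ} (hs : 0 < s) (hs1 : s ≤ 1) :
    ∀ z w, Complex.abs z ≤ 1 → Complex.abs w ≤ 1 → Af f s z = Af f s w → z = w := by
  have houtabs : ∀ z : ℂ, s < Complex.abs z → Complex.abs z ≤ 1 →
      Complex.abs (Af f s z) = Complex.abs z := by
    intro z hsz hz1
    have hzne : z ≠ 0 := by
      rw [← Complex.abs.ne_zero_iff]; linarith
    rw [Af_outer Hper flift hzne hsz.le, abs_Bf]
  have hS : ((s:ℝ):ℂ) ≠ 0 := by
    simpa [Complex.ofReal_eq_zero] using ne_of_gt hs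
  have hmixed : ∀ z w : ℂ, Complex.abs z ≤ s → s < Complex.abs w → Complex.abs w ≤ 1 →
      Af f s z ≠ Af f s w := by
    intro z w hzs hsw hw1 heq
    have h1 : Complex.abs (Af f s z) ≤ s := abs_Af_inner fbound hs hzs
    have h2 : Complex.abs (Af f s w) = Complex.abs w := houtabs w hsw hw1
    rw [heq, h2] at h1
    linarith
  intro z w hz hw heq
  rcases le_or_gt (Complex.abs z) s with hzs | hzs <;>
    rcases le_or_gt (Complex.abs w) s with hws | hws
  · -- both inner
    rw [Af_inner hs hzs, Af_inner hs hws] at heq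
    have heq2 : f (z / (s:ℂ)) = f (w / (s:ℂ)) := mul_left_cancel₀ hS heq
    have hd : z / (s:ℂ) = w / (s:ℂ) := by
      apply finj _ _ _ _ heq2 <;>
      · rw [map_div₀, Complex.abs_ofReal, abs_of_pos hs, div_le_one hs]
        assumption
    field_simp at hd
    exact hd
  · exact absurd heq (hmixed z w hzs hws hw)
  · exact absurd heq.symm (hmixed w z hws hzs hz)
  · -- both outer
    have hzne : z ≠ 0 := by rw [← Complex.abs.ne_zero_iff]; linarith
    have hwne : w ≠ 0 := by rw [← Complex.abs.ne_zero_iff]; linarith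
    rw [Af_outer Hper flift hzne hzs.le, Af_outer Hper flift hwne hws.le] at heq
    exact Bf_injective Hmono Hper le_rfl zero_le_one heq

lemma Af_surjective (Hcont : Continuous H) (Hmono : StrictMono H)
    (Hper : ∀ x : ℝ, H (x + 1) = H x + 1)
    (flift : ∀ x : ℝ, f (eθ x) = eθ (H x))
    (fsurj : ∀ w, Complex.abs w ≤ 1 → ∃ z, Complex.abs z ≤ 1 ∧ f z = w)
    {s : ℝ} (hs : 0 < s) (hs1 : s ≤ 1) :
    ∀ w, Complex.abs w ≤ 1 → ∃ z, Complex.abs z ≤ 1 ∧ Af f s z = w := by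
  intro w hw
  have hS : ((s:ℝ):ℂ) ≠ 0 := by
    simpa [Complex.ofReal_eq_zero] using ne_of_gt hs
  rcases le_or_gt (Complex.abs w) s with hws | hws
  · obtain ⟨u, hu1, hu2⟩ := fsurj (w / (s:ℂ))
      (by rw [map_div₀, Complex.abs_ofReal, abs_of_pos hs, div_le_one hs]; exact hws)
    refine ⟨(s:ℂ) * u, ?_, ?_⟩
    · rw [map_mul, Complex.abs_ofReal, abs_of_pos hs]
      calc s * Complex.abs u ≤ s * 1 := by
            exact mul_le_mul_of_nonneg_left hu1 hs.le
        _ ≤ 1 := by rw [mul_one]; exact hs1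
    · have habsu : Complex.abs ((s:ℂ) * u) ≤ s := by
        rw [map_mul, Complex.abs_ofReal, abs_of_pos hs]
        calc s * Complex.abs u ≤ s * 1 := mul_le_mul_of_nonneg_left hu1 hs.le
          _ = s := mul_one s
      rw [Af_inner hs habsu, mul_div_cancel_left₀ _ hS, hu2]
      field_simp
  · obtain ⟨z, hz1, hz2⟩ := Bf_surj Hcont Hmono Hper le_rfl zero_le_one (H := H) w
    have hzne : z ≠ 0 := by
      rw [← Complex.abs.ne_zero_iff, hz1]
      intro hc
      rw [hc] at hws
      linarith
    refine ⟨z, by rw [hz1]; exact hw, ?_⟩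
    rw [Af_outer Hper flift hzne (by rw [hz1]; linarith)]
    exact hz2

end AlexTrick


open AlexTrick

/-- Every orientation-preserving homeomorphism of the closed unit disk (one mapping the
boundary circle onto itself, whose boundary restriction lifts to a continuous strictly
increasing map `H : ℝ → ℝ` with `H (x+1) = H x + 1`) is isotopic to the identity. -/
theorem orientation_preserving_homeomorph_disk_isotopic_to_id
    (h : Homeomorph (Metric.closedBall (0 : ℂ) 1) (Metric.closedBall (0 : ℂ) 1))
    (hbd : (fun x => h x) '' {x : Metric.closedBall (0 : ℂ) 1 | ‖x.val‖ = 1}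
      = {x : Metric.closedBall (0 : ℂ) 1 | ‖x.val‖ = 1})
    (H : ℝ → ℝ) (Hcont : Continuous H) (Hmono : StrictMono H)
    (Hper : ∀ x : ℝ, H (x + 1) = H x + 1)
    (Hlift : ∀ x : ℝ,
      h ⟨Complex.exp ((2 * π * x : ℝ) * Complex.I), by
          rw [Metric.mem_closedBall, dist_zero_right, Complex.norm_exp_ofReal_mul_I]⟩
        = ⟨Complex.exp ((2 * π * H x : ℝ) * Complex.I), by
          rw [Metric.mem_closedBall, dist_zero_right, Complex.norm_exp_ofReal_mul_I]⟩) :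
    ∃ F : I × Metric.closedBall (0 : ℂ) 1 → Metric.closedBall (0 : ℂ) 1,
      Continuous F ∧
      (∀ x, F (0, x) = h x) ∧
      (∀ x, F (1, x) = x) ∧
      (∀ t : I, IsHomeomorph fun x => F (t, x)) := by
  classical
  have memD : ∀ z : ℂ, z ∈ Metric.closedBall (0:ℂ) 1 ↔ Complex.abs z ≤ 1 := by
    intro z
    rw [Metric.mem_closedBall, dist_zero_right, Complex.norm_eq_abs]
  -- the extension of `h` to a globally continuous map `f : ℂ → ℂ`
  set hval : ℂ → ℂ := fun z =>
    if hz : z ∈ Metric.closedBall (0:ℂ) 1 then ((h ⟨z, hz⟩ : Metric.closedBall (0:ℂ) 1) : ℂ)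
    else 0 with hval_def
  have hval_eq : ∀ z (hz : z ∈ Metric.closedBall (0:ℂ) 1),
      hval z = ((h ⟨z, hz⟩ : Metric.closedBall (0:ℂ) 1) : ℂ) := by
    intro z hz
    rw [hval_def]
    simp [hz]
  set f : ℂ → ℂ := fun z => hval (z / ((max 1 (Complex.abs z) : ℝ) : ℂ)) with f_def
  have hrmem : ∀ z : ℂ, z / ((max 1 (Complex.abs z) : ℝ) : ℂ) ∈ Metric.closedBall (0:ℂ) 1 := by
    intro z
    rw [memD, map_div₀, Complex.abs_ofReal, abs_of_pos (by positivity)]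
    rw [div_le_one (by positivity)]
    exact le_max_right _ _
  have f_eq : ∀ z (hz : z ∈ Metric.closedBall (0:ℂ) 1),
      f z = ((h ⟨z, hz⟩ : Metric.closedBall (0:ℂ) 1) : ℂ) := by
    intro z hz
    have h1 : max 1 (Complex.abs z) = 1 := max_eq_left ((memD z).mp hz)
    rw [f_def]
    simp only [h1]
    rw [show ((1:ℝ):ℂ) = 1 from rfl, div_one]
    exact hval_eq z hz
  have fbound : ∀ z, Complex.abs (f z) ≤ 1 := by
    intro z
    rw [f_def]
    simp only
    rw [hval_eq _ (hrmem z)]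
    exact (memD _).mp (h _).2
  have fcont : Continuous f := by
    have hvalcont : ContinuousOn hval (Metric.closedBall (0:ℂ) 1) := by
      rw [continuousOn_iff_continuous_restrict]
      have : Set.domRestrict (Metric.closedBall (0:ℂ) 1) hval
          = fun p => ((h p : Metric.closedBall (0:ℂ) 1) : ℂ) := by
        funext p
        rw [Set.domRestrict_apply, hval_eq _ p.2]
      rw [this]
      exact continuous_subtype_val.comp h.continuous
    have hrcont : Continuous fun z : ℂ => z / ((max 1 (Complex.abs z) : ℝ) : ℂ) := by
      apply Continuous.div continuous_id
      · exact Complex.continuous_ofReal.comp (continuous_const.max Complex.continuous_abs)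
      · intro z
        rw [Complex.ofReal_ne_zero]
        positivity
    exact hvalcont.comp_continuous hrcont hrmem
  have finj : ∀ z w, Complex.abs z ≤ 1 → Complex.abs w ≤ 1 → f z = f w → z = w := by
    intro z w hz hw hzw
    rw [f_eq z ((memD z).mpr hz), f_eq w ((memD w).mpr hw)] at hzw
    have := h.injective (Subtype.coe_injective hzw)
    exact congrArg Subtype.val this
  have fsurj : ∀ w, Complex.abs w ≤ 1 → ∃ z, Complex.abs z ≤ 1 ∧ f z = w := by
    intro w hw
    refine ⟨(h.symm ⟨w, (memD w).mpr hw⟩ : ℂ), (memD _).mp (h.symm _).2, ?_⟩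
    rw [f_eq _ (h.symm ⟨w, (memD w).mpr hw⟩).2]
    have : (⟨(h.symm ⟨w, (memD w).mpr hw⟩ : ℂ), (h.symm ⟨w, (memD w).mpr hw⟩).2⟩ :
        Metric.closedBall (0:ℂ) 1) = h.symm ⟨w, (memD w).mpr hw⟩ := rfl
    rw [this, h.apply_symm_apply]
  have fcirc : ∀ z, Complex.abs z ≤ 1 → (Complex.abs (f z) = 1 ↔ Complex.abs z = 1) := by
    intro z hz
    rw [f_eq z ((memD z).mpr hz)]
    constructor
    · intro h1
      have hmem : h ⟨z, (memD z).mpr hz⟩ ∈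
          {x : Metric.closedBall (0:ℂ) 1 | ‖x.val‖ = 1} := h1
      rw [← hbd] at hmem
      obtain ⟨y, hy, hyz⟩ := hmem
      have : y = ⟨z, (memD z).mpr hz⟩ := h.injective hyz
      rw [this] at hy
      exact hy
    · intro h1
      have hmem : (⟨z, (memD z).mpr hz⟩ : Metric.closedBall (0:ℂ) 1) ∈
          {x : Metric.closedBall (0:ℂ) 1 | ‖x.val‖ = 1} := h1
      have : h ⟨z, (memD z).mpr hz⟩ ∈
          {x : Metric.closedBall (0:ℂ) 1 | ‖x.val‖ = 1} := by
        rw [← hbd]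
        exact ⟨_, hmem, rfl⟩
      exact this
  have flift : ∀ x : ℝ, f (eθ x) = eθ (H x) := by
    intro x
    have hmem : eθ x ∈ Metric.closedBall (0:ℂ) 1 := by
      rw [memD, abs_eθ]
    rw [f_eq _ hmem]
    have := Hlift x
    exact congrArg Subtype.val this
  -- the ℂ-level isotopy
  set G : ℝ × ℂ → ℂ := fun q =>
    if q.1 ≤ 1/2 then Af f (max (1 - 2*q.1) 0) q.2 else Bf H (2*q.1 - 1) q.2 with G_def
  have Gcont : Continuous G := by
    rw [G_def]
    apply Continuous.if_le
    · have hin : Continuous fun q : ℝ × ℂ => ((1 - 2*q.1, q.2) : ℝ × ℂ) := by fun_prop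
      exact (continuous_Af fcont fbound).comp hin
    · have hin : Continuous fun q : ℝ × ℂ => ((2*q.1 - 1, q.2) : ℝ × ℂ) := by fun_prop
      exact (continuous_Bf Hcont Hper).comp hin
    · exact continuous_fst
    · exact continuous_const
    · rintro ⟨t, z⟩ ht
      simp only at ht ⊢
      rw [ht]
      norm_num
      exact Af_zero_eq Hper flift z
  have Gmem : ∀ (t : ℝ), 0 ≤ t → ∀ z : ℂ, Complex.abs z ≤ 1 →
      Complex.abs (G (t, z)) ≤ 1 := by
    intro t ht z hz
    rw [G_def]
    simp only
    split_ifs with h'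
    · calc Complex.abs (Af f (max (1 - 2*t) 0) z) ≤ max (max (1 - 2*t) 0) (Complex.abs z) :=
            abs_Af fbound (le_max_right _ _) z
        _ ≤ 1 := by
            apply max_le (max_le (by linarith) zero_le_one) hz
    · rw [abs_Bf]
      exact hz
  refine ⟨fun q => ⟨G ((q.1 : ℝ), (q.2 : ℂ)), (memD _).mpr
    (Gmem _ q.1.2.1 _ ((memD _).mp q.2.2))⟩, ?_, ?_, ?_, ?_⟩
  · -- continuity
    apply Continuous.subtype_mk
    have hin : Continuous fun q : unitInterval × Metric.closedBall (0:ℂ) 1 =>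
        (((q.1 : ℝ), (q.2 : ℂ)) : ℝ × ℂ) :=
      (continuous_subtype_val.comp continuous_fst).prodMk
        (continuous_subtype_val.comp continuous_snd)
    exact Gcont.comp hin
  · -- F (0, x) = h x
    intro x
    apply Subtype.ext
    show G ((0:ℝ), (x : ℂ)) = _
    rw [G_def]
    simp only
    rw [if_pos (by norm_num)]
    norm_num
    rw [Af_one ((memD _).mp x.2)]
    rw [f_eq _ x.2]
  · -- F (1, x) = x
    intro x
    apply Subtype.ext
    show G ((1:ℝ), (x : ℂ)) = _
    rw [G_def]
    simp only
    rw [if_neg (by norm_num)]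
    norm_num
    exact Bf_one _
  · -- each slice is a homeomorphism
    intro t
    have hcompact : CompactSpace (Metric.closedBall (0:ℂ) 1) :=
      isCompact_iff_compactSpace.mp (isCompact_closedBall (0:ℂ) 1)
    set slice : Metric.closedBall (0:ℂ) 1 → Metric.closedBall (0:ℂ) 1 :=
      fun x => ⟨G ((t : ℝ), (x : ℂ)), (memD _).mpr (Gmem _ t.2.1 _ ((memD _).mp x.2))⟩
      with slice_def
    have hGinj : ∀ z w, Complex.abs z ≤ 1 → Complex.abs w ≤ 1 →
        G ((t:ℝ), z) = G ((t:ℝ), w) → z = w := by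
      intro z w hz hw hzw
      rw [G_def] at hzw
      simp only at hzw
      split_ifs at hzw with h'
      · rcases lt_or_eq_of_le h' with h'' | h''
        · have hs : 0 < max (1 - 2*(t:ℝ)) 0 := by
            rw [lt_max_iff]; left; linarith
          have hs1 : max (1 - 2*(t:ℝ)) 0 ≤ 1 := max_le (by linarith [t.2.1]) zero_le_one
          exact Af_injective Hmono Hper flift fbound fcirc finj hs hs1 z w hz hw hzw
        · rw [show max (1 - 2*(t:ℝ)) 0 = 0 by rw [h'']; norm_num] at hzw
          rw [Af_zero_eq Hper flift, Af_zero_eq Hper flift] at hzw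
          exact Bf_injective Hmono Hper le_rfl zero_le_one hzw
      · have h0 : (0:ℝ) ≤ 2*(t:ℝ) - 1 := by push_neg at h'; linarith
        have h1 : 2*(t:ℝ) - 1 ≤ 1 := by linarith [t.2.2]
        exact Bf_injective Hmono Hper h0 h1 hzw
    have hGsurj : ∀ w, Complex.abs w ≤ 1 →
        ∃ z, Complex.abs z ≤ 1 ∧ G ((t:ℝ), z) = w := by
      intro w hw
      rw [G_def]
      simp only
      split_ifs with h'
      · rcases lt_or_eq_of_le h' with h'' | h''
        · have hs : 0 < max (1 - 2*(t:ℝ)) 0 := by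
            rw [lt_max_iff]; left; linarith
          have hs1 : max (1 - 2*(t:ℝ)) 0 ≤ 1 := max_le (by linarith [t.2.1]) zero_le_one
          exact Af_surjective Hcont Hmono Hper flift fsurj hs hs1 w hw
        · obtain ⟨z, hz1, hz2⟩ := Bf_surj Hcont Hmono Hper le_rfl zero_le_one (H := H) w
          refine ⟨z, by rw [hz1]; exact hw, ?_⟩
          rw [show max (1 - 2*(t:ℝ)) 0 = 0 by rw [h'']; norm_num]
          rw [Af_zero_eq Hper flift]
          exact hz2
      · have h0 : (0:ℝ) ≤ 2*(t:ℝ) - 1 := by push_neg at h'; linarith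
        have h1 : 2*(t:ℝ) - 1 ≤ 1 := by linarith [t.2.2]
        obtain ⟨z, hz1, hz2⟩ := Bf_surj Hcont Hmono Hper h0 h1 (H := H) w
        exact ⟨z, by rw [hz1]; exact hw, hz2⟩
    have hbij : Function.Bijective slice := by
      constructor
      · intro x y hxy
        apply Subtype.ext
        apply hGinj _ _ ((memD _).mp x.2) ((memD _).mp y.2)
        exact congrArg Subtype.val hxy
      · rintro ⟨w, hw⟩
        obtain ⟨z, hz1, hz2⟩ := hGsurj w ((memD w).mp hw)
        exact ⟨⟨z, (memD z).mpr hz1⟩, Subtype.ext hz2⟩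
    have hslicecont : Continuous slice := by
      apply Continuous.subtype_mk
      have hin : Continuous fun x : Metric.closedBall (0:ℂ) 1 =>
          (((t : ℝ), (x : ℂ)) : ℝ × ℂ) :=
        continuous_const.prodMk continuous_subtype_val
      exact Gcont.comp hin
    rw [isHomeomorph_iff_exists_homeomorph]
    exact ⟨Continuous.homeoOfEquivCompactToT2 (f := Equiv.ofBijective slice hbij)
      hslicecont, rfl⟩
end
end

section
/- Let S = [0,1] × ℝ be the doubly infinite closed strip and let h : S → S be a homeomorphism for which there exists a homotopy H : [0,1] × S → S from h to the identity (H(0,·) = h, H(1,·) = id) such that H is a proper map and H(t, ·) maps the boundary ({0,1} × ℝ) into itself for every t ∈ [0,1]. Then h is isotopic to the identity: there exists a continuous map F : [0,1] × S → S such that F(0,·) = h, F(1,·) = id, and F(t,·) : S → S is a homeomorphism for every t ∈ [0,1]. -/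
open unitInterval

open Set Filter Topology


open unitInterval Set Filter Topology

noncomputable section StripIsotopyAux

/-- Squared euclidean norm on `ℝ × ℝ`. -/
def qn (z : ℝ × ℝ) : ℝ := z.1 ^ 2 + z.2 ^ 2

lemma qn_nonneg (z : ℝ × ℝ) : 0 ≤ qn z := by unfold qn; positivity

lemma continuous_qn : Continuous qn := by
  unfold qn; fun_prop

lemma qn_smul (t : ℝ) (z : ℝ × ℝ) : qn (t • z) = t ^ 2 * qn z := by
  simp [qn, Prod.smul_def, smul_eq_mul]; ring

/-- The embedding of the strip into the closed unit disk minus the poles. -/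
def psiMap (p : I × ℝ) : ℝ × ℝ :=
  ((2 * (p.1 : ℝ) - 1) / Real.sqrt (1 + p.2 ^ 2), p.2 / Real.sqrt (1 + p.2 ^ 2))

/-- Inverse of `psiMap`, defined (as junk) everywhere. -/
def psiInv (z : ℝ × ℝ) : I × ℝ :=
  (Set.projIcc (0 : ℝ) 1 zero_le_one ((z.1 / Real.sqrt (1 - z.2 ^ 2) + 1) / 2),
    z.2 / Real.sqrt (1 - z.2 ^ 2))

lemma sqrt_one_add_sq_pos (y : ℝ) : 0 < Real.sqrt (1 + y ^ 2) := by
  apply Real.sqrt_pos.2; positivity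

lemma sq_sqrt_one_add_sq (y : ℝ) : (Real.sqrt (1 + y ^ 2)) ^ 2 = 1 + y ^ 2 :=
  Real.sq_sqrt (by positivity)

lemma psiMap_mem (p : I × ℝ) : qn (psiMap p) ≤ 1 ∧ (psiMap p).2 ^ 2 < 1 := by
  obtain ⟨x, y⟩ := p
  have hc := sqrt_one_add_sq_pos y
  have hc2 := sq_sqrt_one_add_sq y
  have hx0 : (0:ℝ) ≤ x := x.2.1
  have hx1 : (x:ℝ) ≤ 1 := x.2.2
  constructor
  · have : qn (psiMap (x, y)) = ((2 * (x:ℝ) - 1) ^ 2 + y ^ 2) / (1 + y ^ 2) := by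
      simp only [qn, psiMap, div_pow, hc2]
      ring
    rw [this, div_le_one (by positivity)]
    nlinarith
  · simp only [psiMap, div_pow, hc2]
    rw [div_lt_one (by positivity)]
    nlinarith

lemma psiInv_psiMap (p : I × ℝ) : psiInv (psiMap p) = p := by
  obtain ⟨x, y⟩ := p
  have hc := sqrt_one_add_sq_pos y
  have hc2 := sq_sqrt_one_add_sq y
  have key : Real.sqrt (1 - (y / Real.sqrt (1 + y ^ 2)) ^ 2) = 1 / Real.sqrt (1 + y ^ 2) := by
    have : 1 - (y / Real.sqrt (1 + y ^ 2)) ^ 2 = (1 / Real.sqrt (1 + y ^ 2)) ^ 2 := by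
      field_simp; rw [hc2]; ring
    rw [this, Real.sqrt_sq (by positivity)]
  simp only [psiInv, psiMap, key]
  rw [Prod.mk.injEq]
  constructor
  · have hval : ((2 * (x:ℝ) - 1) / Real.sqrt (1 + y ^ 2) / (1 / Real.sqrt (1 + y ^ 2)) + 1) / 2
        = (x : ℝ) := by field_simp; ring
    rw [hval, Set.projIcc_of_mem zero_le_one x.2]
  · field_simp

lemma psiMap_psiInv {z : ℝ × ℝ} (h1 : qn z ≤ 1) (h2 : z.2 ^ 2 < 1) :
    psiMap (psiInv z) = z := by
  obtain ⟨u, v⟩ := z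
  have hv2 : v ^ 2 < 1 := h2
  have hd : 0 < Real.sqrt (1 - v ^ 2) := Real.sqrt_pos.2 (by linarith)
  have hd2 : (Real.sqrt (1 - v ^ 2)) ^ 2 = 1 - v ^ 2 := Real.sq_sqrt (by linarith)
  set d := Real.sqrt (1 - v ^ 2) with hdd
  have hu2 : u ^ 2 ≤ d ^ 2 := by rw [hd2]; simp only [qn] at h1; linarith
  have hmem : (u / d + 1) / 2 ∈ Set.Icc (0:ℝ) 1 := by
    have hud : -1 ≤ u / d ∧ u / d ≤ 1 := by
      constructor
      · rw [neg_le, ← neg_div, div_le_one hd]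
        nlinarith [sq_nonneg (u + d), sq_nonneg (u - d)]
      · rw [div_le_one hd]
        nlinarith [sq_nonneg (u + d), sq_nonneg (u - d)]
    constructor <;> [linarith [hud.1]; linarith [hud.2]]
  have key : Real.sqrt (1 + (v / d) ^ 2) = 1 / d := by
    have : 1 + (v / d) ^ 2 = (1 / d) ^ 2 := by
      field_simp; nlinarith [hd2]
    rw [this, Real.sqrt_sq (by positivity)]
  simp only [psiMap, psiInv, ← hdd, Set.projIcc_of_mem zero_le_one hmem, key]
  rw [Prod.mk.injEq]
  constructor
  · field_simp; ring
  · field_simp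

lemma psiInv_boundary {z : ℝ × ℝ} (h1 : qn z = 1) (h2 : z.2 ^ 2 < 1) :
    ((psiInv z).1 : ℝ) = 0 ∨ ((psiInv z).1 : ℝ) = 1 := by
  obtain ⟨u, v⟩ := z
  have hd : 0 < Real.sqrt (1 - v ^ 2) := Real.sqrt_pos.2 (by linarith)
  have hd2 : (Real.sqrt (1 - v ^ 2)) ^ 2 = 1 - v ^ 2 := Real.sq_sqrt (by linarith)
  set d := Real.sqrt (1 - v ^ 2) with hdd
  have hu2 : u ^ 2 = d ^ 2 := by rw [hd2]; simp only [qn] at h1; linarith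
  have : u = d ∨ u = -d := sq_eq_sq_iff_eq_or_eq_neg.mp hu2
  rcases this with h | h
  · right
    have hmem : (u / d + 1) / 2 ∈ Set.Icc (0:ℝ) 1 := by
      rw [h, div_self hd.ne']; norm_num
    simp only [psiInv, Set.projIcc_of_mem zero_le_one hmem]
    rw [h, div_self hd.ne']; norm_num
  · left
    have hmem : (u / d + 1) / 2 ∈ Set.Icc (0:ℝ) 1 := by
      rw [h, neg_div, div_self hd.ne']; norm_num
    simp only [psiInv, Set.projIcc_of_mem zero_le_one hmem]
    rw [h, neg_div, div_self hd.ne']; norm_num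

lemma continuous_psiMap : Continuous psiMap := by
  unfold psiMap
  have h : ∀ y : ℝ, Real.sqrt (1 + y ^ 2) ≠ 0 := fun y => (sqrt_one_add_sq_pos y).ne'
  fun_prop (disch := intros; exact h _)

lemma continuousOn_psiInv : ContinuousOn psiInv {z : ℝ × ℝ | z.2 ^ 2 < 1} := by
  have h : ∀ z : ℝ × ℝ, z ∈ {z : ℝ × ℝ | z.2 ^ 2 < 1} → Real.sqrt (1 - z.2 ^ 2) ≠ 0 := by
    intro z hz
    exact (Real.sqrt_pos.2 (by simp only [Set.mem_setOf_eq] at hz; linarith)).ne'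
  have hden : ContinuousOn (fun z : ℝ × ℝ => Real.sqrt (1 - z.2 ^ 2)) {z : ℝ × ℝ | z.2 ^ 2 < 1} :=
    (Real.continuous_sqrt.comp (by fun_prop)).continuousOn
  have hdiv1 : ContinuousOn (fun z : ℝ × ℝ => z.1 / Real.sqrt (1 - z.2 ^ 2))
      {z : ℝ × ℝ | z.2 ^ 2 < 1} := ContinuousOn.div continuous_fst.continuousOn hden h
  have hdiv2 : ContinuousOn (fun z : ℝ × ℝ => z.2 / Real.sqrt (1 - z.2 ^ 2))
      {z : ℝ × ℝ | z.2 ^ 2 < 1} := ContinuousOn.div continuous_snd.continuousOn hden h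
  unfold psiInv
  apply ContinuousOn.prodMk
  · exact Continuous.comp_continuousOn continuous_projIcc ((hdiv1.add continuousOn_const).div_const 2)
  · exact hdiv2

end StripIsotopyAux
section Helpers

open Set Filter Topology unitInterval

lemma continuous_of_closed_pair {α β : Type*} [TopologicalSpace α] [TopologicalSpace β]
    {f : α → β} {s t : Set α} (hs : IsClosed s) (ht : IsClosed t)
    (hcov : s ∪ t = Set.univ) (hfs : ContinuousOn f s) (hft : ContinuousOn f t) :
    Continuous f := by
  rw [← continuousOn_univ, ← hcov]
  intro x _
  have cs : ContinuousWithinAt f s x := by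
    by_cases h : x ∈ s
    · exact hfs x h
    · exact continuousWithinAt_of_notMem_closure (by rwa [hs.closure_eq])
  have ct : ContinuousWithinAt f t x := by
    by_cases h : x ∈ t
    · exact hft x h
    · exact continuousWithinAt_of_notMem_closure (by rwa [ht.closure_eq])
  exact cs.union ct

lemma exists_bound_of_compact {α : Type*} [TopologicalSpace α] {K : Set α} (hK : IsCompact K)
    {f : α → ℝ} (hf : Continuous f) : ∃ B, ∀ x ∈ K, |f x| ≤ B := by
  rcases (hK.image (continuous_abs.comp hf)).bddAbove with ⟨B, hB⟩
  exact ⟨B, fun x hx => hB ⟨x, hx, rfl⟩⟩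

lemma isCompact_slab (a b : ℝ) : IsCompact ((Set.univ : Set I) ×ˢ Set.Icc a b) :=
  isCompact_univ.prod isCompact_Icc

lemma isHomeomorph_strip_of_bijective {f : I × ℝ → I × ℝ} (hc : Continuous f)
    (hb : Function.Bijective f)
    (hp : ∀ K : Set (I × ℝ), IsCompact K → IsCompact (f ⁻¹' K)) : IsHomeomorph f := by
  rw [isHomeomorph_iff_continuous_isClosedMap_bijective]
  exact ⟨hc, (isProperMap_iff_isCompact_preimage.2 ⟨hc, fun K hK => hp _ hK⟩).isClosedMap, hb⟩

lemma strictMono_of_cont_inj_tendsto {f : ℝ → ℝ} (hc : Continuous f) (hi : Function.Injective f)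
    (ht : Filter.Tendsto f Filter.atTop Filter.atTop) : StrictMono f := by
  intro a b hab
  rcases lt_or_gt_of_ne (hi.ne hab.ne) with h | h
  · exact h
  exfalso
  obtain ⟨c, hc1, hc2⟩ :=
    ((ht.eventually (Filter.eventually_gt_atTop (f a))).and
      (Filter.eventually_ge_atTop b)).exists
  obtain ⟨u, hu, hfu⟩ := intermediate_value_Ioc hc2 hc.continuousOn ⟨h, hc1.le⟩
  have : u = a := hi hfu
  rw [this] at hu
  exact absurd (hab.trans hu.1) (lt_irrefl a)

lemma ends_top (g : (I × ℝ) ≃ₜ (I × ℝ)) (hg0 : ∀ y : ℝ, g ((0 : I), y) = ((0 : I), y))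
    (M : ℝ) : ∃ N, ∀ p : I × ℝ, N ≤ p.2 → M ≤ (g p).2 := by
  set M' := |M| + 1 with hM'
  obtain ⟨B, hB⟩ := exists_bound_of_compact
    (g.isProperMap.isCompact_preimage (isCompact_slab (-M') M')) continuous_snd
  set N := max B M' + 1 with hN
  refine ⟨N, fun p hp => ?_⟩
  set T : Set (I × ℝ) := (Set.univ : Set I) ×ˢ Set.Ici N with hT
  have hTpre : IsPreconnected T := isPreconnected_univ.prod isPreconnected_Ici
  have himg : IsPreconnected ((fun q => (g q).2) '' T) :=
    hTpre.image _ (continuous_snd.comp g.continuous).continuousOn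
  have hout : ∀ q ∈ T, (g q).2 ∉ Set.Icc (-M') M' := by
    intro q hq hmem
    have hqpre : q ∈ g ⁻¹' ((Set.univ : Set I) ×ˢ Set.Icc (-M') M') :=
      Set.mem_preimage.2 ⟨Set.mem_univ _, hmem⟩
    have h1 := hB q hqpre
    have hq2 : N ≤ q.2 := (Set.mem_prod.1 hq).2
    have : q.2 ≤ B := le_trans (le_abs_self _) h1
    have : B < N := by rw [hN]; linarith [le_max_left B M']
    linarith
  have hpT : p ∈ T := ⟨Set.mem_univ _, hp⟩
  have hanchor : ((0 : I), N) ∈ T := ⟨Set.mem_univ _, le_refl N⟩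
  have hanchorval : (g ((0 : I), N)).2 = N := by rw [hg0]
  by_contra hlt
  push_neg at hlt
  have hMM' : M ≤ M' := by rw [hM']; linarith [le_abs_self M, abs_nonneg M]
  have hpnot := hout p hpT
  have hcase : (g p).2 < -M' := by
    rcases lt_or_ge (g p).2 (-M') with h | h
    · exact h
    · exfalso
      rcases lt_or_ge M' (g p).2 with h2 | h2
      · exact absurd (lt_of_le_of_lt hMM' h2) (not_lt.2 hlt.le)
      · exact hpnot ⟨h, h2⟩
  have h0mem : (0 : ℝ) ∈ Set.Icc (g p).2 ((fun q => (g q).2) ((0 : I), N)) := by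
    simp only [hanchorval]
    constructor
    · linarith [abs_nonneg M]
    · have : (0:ℝ) ≤ N := by rw [hN]; positivity
      -- N could rely on B sign; prove 0 ≤ N directly
      exact this
  have hsub := himg.Icc_subset ⟨p, hpT, rfl⟩ ⟨((0 : I), N), hanchor, rfl⟩
  obtain ⟨q, hqT, hq0⟩ := hsub h0mem
  exact hout q hqT (by simp only at hq0; rw [hq0]; constructor <;> linarith [abs_nonneg M])

lemma ends_bot (g : (I × ℝ) ≃ₜ (I × ℝ)) (hg0 : ∀ y : ℝ, g ((0 : I), y) = ((0 : I), y))
    (M : ℝ) : ∃ N, ∀ p : I × ℝ, p.2 ≤ N → (g p).2 ≤ M := by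
  set M' := |M| + 1 with hM'
  obtain ⟨B, hB⟩ := exists_bound_of_compact
    (g.isProperMap.isCompact_preimage (isCompact_slab (-M') M')) continuous_snd
  set N := -(max B M' + 1) with hN
  refine ⟨N, fun p hp => ?_⟩
  set T : Set (I × ℝ) := (Set.univ : Set I) ×ˢ Set.Iic N with hT
  have hTpre : IsPreconnected T := isPreconnected_univ.prod isPreconnected_Iic
  have himg : IsPreconnected ((fun q => (g q).2) '' T) :=
    hTpre.image _ (continuous_snd.comp g.continuous).continuousOn
  have hout : ∀ q ∈ T, (g q).2 ∉ Set.Icc (-M') M' := by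
    intro q hq hmem
    have hqpre : q ∈ g ⁻¹' ((Set.univ : Set I) ×ˢ Set.Icc (-M') M') :=
      Set.mem_preimage.2 ⟨Set.mem_univ _, hmem⟩
    have h1 := hB q hqpre
    have hq2 : q.2 ≤ N := (Set.mem_prod.1 hq).2
    have : -B ≤ q.2 := by
      have := neg_abs_le q.2
      linarith [le_abs_self q.2, abs_le.1 h1]
    have : N < -B := by rw [hN]; linarith [le_max_left B M']
    linarith
  have hpT : p ∈ T := ⟨Set.mem_univ _, hp⟩
  have hanchor : ((0 : I), N) ∈ T := ⟨Set.mem_univ _, le_refl N⟩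
  have hanchorval : (g ((0 : I), N)).2 = N := by rw [hg0]
  by_contra hlt
  push_neg at hlt
  have hMM' : -M' ≤ M := by rw [hM']; linarith [neg_abs_le M, abs_nonneg M]
  have hpnot := hout p hpT
  have hcase : M' < (g p).2 := by
    rcases lt_or_ge M' (g p).2 with h | h
    · exact h
    · exfalso
      rcases lt_or_ge (g p).2 (-M') with h2 | h2
      · exact absurd (h2.trans_le hMM') (not_lt.2 hlt.le)
      · exact hpnot ⟨h2, h⟩
  have h0mem : (0 : ℝ) ∈ Set.Icc ((fun q => (g q).2) ((0 : I), N)) (g p).2 := by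
    simp only [hanchorval]
    constructor
    · rw [hN]; have h1 : (0:ℝ) ≤ max B M' + 1 := by positivity
      linarith
    · linarith [abs_nonneg M]
  have hsub := himg.Icc_subset ⟨((0 : I), N), hanchor, rfl⟩ ⟨p, hpT, rfl⟩
  obtain ⟨q, hqT, hq0⟩ := hsub h0mem
  exact hout q hqT (by simp only at hq0; rw [hq0]; constructor <;> linarith [abs_nonneg M])

end Helpers
section Ghat

open Set Filter Topology unitInterval

/-- `σ y = y / √(1+y²)`, the second coordinate of `psiMap`. -/
lemma sigma_lt_one (y : ℝ) : y / Real.sqrt (1 + y ^ 2) < 1 := by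
  rcases le_or_gt y 0 with h | h
  · have := sqrt_one_add_sq_pos y
    have : y / Real.sqrt (1 + y ^ 2) ≤ 0 := div_nonpos_iff.2 (Or.inr ⟨h, this.le⟩)
    linarith
  · rw [div_lt_one (sqrt_one_add_sq_pos y)]
    have h2 : y ^ 2 < 1 + y ^ 2 := by linarith
    calc y = Real.sqrt (y ^ 2) := (Real.sqrt_sq h.le).symm
    _ < Real.sqrt (1 + y ^ 2) := by
        apply Real.sqrt_lt_sqrt (by positivity) h2

lemma sigma_mono : Monotone (fun y : ℝ => y / Real.sqrt (1 + y ^ 2)) := by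
  intro a b hab
  have hsa := sqrt_one_add_sq_pos a
  have hsb := sqrt_one_add_sq_pos b
  have hsa2 := sq_sqrt_one_add_sq a
  have hsb2 := sq_sqrt_one_add_sq b
  simp only
  rw [div_le_div_iff₀ hsa hsb]
  rcases le_or_gt 0 a with ha | ha
  · -- 0 ≤ a ≤ b
    have hb : 0 ≤ b := ha.trans hab
    apply le_of_pow_le_pow_left₀ (n := 2) two_ne_zero (by positivity)
    rw [mul_pow, mul_pow, hsa2, hsb2]
    nlinarith
  · rcases le_or_gt 0 b with hb | hb
    · -- a < 0 ≤ b
      have h1 : a * Real.sqrt (1 + b ^ 2) ≤ 0 := mul_nonpos_of_nonpos_of_nonneg ha.le hsb.le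
      have h2 : 0 ≤ b * Real.sqrt (1 + a ^ 2) := mul_nonneg hb hsa.le
      linarith
    · -- a ≤ b < 0
      rw [show a * Real.sqrt (1 + b ^ 2) = -((-a) * Real.sqrt (1 + b ^ 2)) by ring,
        show b * Real.sqrt (1 + a ^ 2) = -((-b) * Real.sqrt (1 + a ^ 2)) by ring,
        neg_le_neg_iff]
      apply le_of_pow_le_pow_left₀ (n := 2) two_ne_zero
        (mul_nonneg (by linarith : (0:ℝ) ≤ -a) hsb.le)
      rw [mul_pow, mul_pow, hsa2, hsb2]
      nlinarith

lemma sigma_m {c : ℝ} (hc : c ^ 2 < 1) :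
    (c / Real.sqrt (1 - c ^ 2)) / Real.sqrt (1 + (c / Real.sqrt (1 - c ^ 2)) ^ 2) = c := by
  have h1 : qn ((0 : ℝ), c) ≤ 1 := by simp only [qn]; nlinarith
  have := congrArg Prod.snd (psiMap_psiInv (z := ((0:ℝ), c)) h1 hc)
  simpa [psiMap, psiInv] using this

lemma m_sigma (Y : ℝ) :
    (Y / Real.sqrt (1 + Y ^ 2)) / Real.sqrt (1 - (Y / Real.sqrt (1 + Y ^ 2)) ^ 2) = Y := by
  have := congrArg Prod.snd (psiInv_psiMap ((0 : I), Y))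
  simpa [psiMap, psiInv] using this

lemma m_mono {w v : ℝ} (hw : 0 ≤ w) (hwv : w ≤ v) (hv : v < 1) :
    w / Real.sqrt (1 - w ^ 2) ≤ v / Real.sqrt (1 - v ^ 2) := by
  have hw1 : w < 1 := lt_of_le_of_lt hwv hv
  have hdv : 0 < Real.sqrt (1 - v ^ 2) := Real.sqrt_pos.2 (by nlinarith [hwv.trans_lt hv])
  have hdw : 0 < Real.sqrt (1 - w ^ 2) := Real.sqrt_pos.2 (by nlinarith)
  have hsub : Real.sqrt (1 - v ^ 2) ≤ Real.sqrt (1 - w ^ 2) := by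
    apply Real.sqrt_le_sqrt; nlinarith
  calc w / Real.sqrt (1 - w ^ 2) ≤ v / Real.sqrt (1 - w ^ 2) := by gcongr
  _ ≤ v / Real.sqrt (1 - v ^ 2) := by
      apply div_le_div_of_nonneg_left (hw.trans hwv) hdv hsub

/-- The extension of a boundary-fixing homeomorphism of the strip to the closed unit disk
(extended by the identity off the open disk minus poles). -/
noncomputable def ghat (g : I × ℝ → I × ℝ) (z : ℝ × ℝ) : ℝ × ℝ :=
  if qn z ≤ 1 ∧ z.2 ^ 2 < 1 then psiMap (g (psiInv z)) else z

lemma ghat_eq_of_mem (g : I × ℝ → I × ℝ) {z : ℝ × ℝ} (hz : qn z ≤ 1 ∧ z.2 ^ 2 < 1) :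
    ghat g z = psiMap (g (psiInv z)) := if_pos hz

lemma ghat_mem_Dstar (g : I × ℝ → I × ℝ) {z : ℝ × ℝ} (hz : qn z ≤ 1 ∧ z.2 ^ 2 < 1) :
    qn (ghat g z) ≤ 1 ∧ (ghat g z).2 ^ 2 < 1 := by
  rw [ghat_eq_of_mem g hz]; exact psiMap_mem _

lemma ghat_mem_D (g : I × ℝ → I × ℝ) {z : ℝ × ℝ} (hz : qn z ≤ 1) : qn (ghat g z) ≤ 1 := by
  unfold ghat
  split
  · exact (psiMap_mem _).1
  · exact hz

lemma ghat_id_of_one_le (g : I × ℝ → I × ℝ)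
    (hg0 : ∀ y : ℝ, g ((0 : I), y) = ((0 : I), y))
    (hg1 : ∀ y : ℝ, g ((1 : I), y) = ((1 : I), y))
    {z : ℝ × ℝ} (hz : 1 ≤ qn z) : ghat g z = z := by
  unfold ghat
  split
  case isTrue h =>
    have hq : qn z = 1 := le_antisymm h.1 hz
    have hfix : g (psiInv z) = psiInv z := by
      rcases psiInv_boundary hq h.2 with h0 | h0
      · have : (psiInv z).1 = (0 : I) := Subtype.ext h0
        have hrw : psiInv z = ((0 : I), (psiInv z).2) := by
          rw [← this]
        rw [hrw, hg0]
      · have : (psiInv z).1 = (1 : I) := Subtype.ext h0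
        have hrw : psiInv z = ((1 : I), (psiInv z).2) := by
          rw [← this]
        rw [hrw, hg1]
    rw [hfix, psiMap_psiInv h.1 h.2]
  case isFalse h => rfl

lemma ghat_ghat (g g' : I × ℝ → I × ℝ) (hgg : ∀ p, g' (g p) = p) (z : ℝ × ℝ) :
    ghat g' (ghat g z) = z := by
  by_cases hz : qn z ≤ 1 ∧ z.2 ^ 2 < 1
  · rw [ghat_eq_of_mem g hz, ghat_eq_of_mem g' (psiMap_mem _), psiInv_psiMap, hgg,
      psiMap_psiInv hz.1 hz.2]
  · have h1 : ghat g z = z := if_neg hz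
    rw [h1]; exact if_neg hz

/-- second coordinate of `ghat` tends to `1` at the north pole, within the disk. -/
lemma tendsto_snd_ghat_pole (g : (I × ℝ) ≃ₜ (I × ℝ))
    (hg0 : ∀ y : ℝ, g ((0 : I), y) = ((0 : I), y)) :
    Tendsto (fun z => (ghat g z).2) (𝓝[{z : ℝ × ℝ | qn z ≤ 1}] ((0 : ℝ), (1 : ℝ))) (𝓝 1) := by
  rw [tendsto_order]
  constructor
  · -- lower bounds
    intro a ha
    set c : ℝ := (max a 0 + 1) / 2 with hc
    have hc0 : 0 ≤ c := by positivity
    have hc1 : c < 1 := by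
      have h1 : max a 0 < 1 := max_lt ha one_pos
      rw [hc]; linarith
    have hac : a < c := by
      have h1 : a ≤ max a 0 := le_max_left _ _
      rw [hc]; linarith
    set mc := c / Real.sqrt (1 - c ^ 2) with hmc
    obtain ⟨N, hN⟩ := ends_top g hg0 mc
    set N' := max N 0 with hN'
    set v₀ := N' / Real.sqrt (1 + N' ^ 2) with hv₀
    have hv₀0 : 0 ≤ v₀ := by
      rw [hv₀]; positivity
    have hv₀1 : v₀ < 1 := sigma_lt_one N'
    have hopen : IsOpen {z : ℝ × ℝ | v₀ < z.2} := isOpen_lt continuous_const continuous_snd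
    have hmem : ((0 : ℝ), (1 : ℝ)) ∈ {z : ℝ × ℝ | v₀ < z.2} := hv₀1
    filter_upwards [self_mem_nhdsWithin,
      mem_nhdsWithin_of_mem_nhds (hopen.mem_nhds hmem)] with z hzD hzV
    by_cases hsq : z.2 ^ 2 < 1
    · -- interesting case
      rw [ghat_eq_of_mem g ⟨hzD, hsq⟩]
      have hz2lt : z.2 < 1 := by nlinarith
      have hz20 : 0 ≤ z.2 := hv₀0.trans hzV.le
      -- (psiInv z).2 = z.2 / √(1 - z.2²) ≥ N
      have hm : N ≤ (psiInv z).2 := by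
        have h1 : v₀ / Real.sqrt (1 - v₀ ^ 2) ≤ z.2 / Real.sqrt (1 - z.2 ^ 2) :=
          m_mono hv₀0 hzV.le hz2lt
        have h2 : v₀ / Real.sqrt (1 - v₀ ^ 2) = N' := m_sigma N'
        have h3 : N ≤ N' := le_max_left _ _
        simp only [psiInv]
        linarith
      have hY : mc ≤ (g (psiInv z)).2 := hN _ hm
      have : c ≤ (psiMap (g (psiInv z))).2 := by
        have h1 : (psiMap (g (psiInv z))).2
            = (g (psiInv z)).2 / Real.sqrt (1 + ((g (psiInv z)).2) ^ 2) := rfl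
        rw [h1]
        have h2 := sigma_mono hY
        dsimp only at h2
        have h3 : mc / Real.sqrt (1 + mc ^ 2) = c := sigma_m (by nlinarith)
        linarith
      linarith
    · -- z is the pole itself
      have hz21 : z.2 = 1 := by
        push_neg at hsq
        have h1 : z.2 ^ 2 ≤ 1 := by
          have := qn_nonneg z
          simp only [qn] at hzD ⊢
          nlinarith [sq_nonneg z.1]
        have h2 : z.2 ^ 2 = 1 := le_antisymm h1 hsq
        have h3 : 0 ≤ z.2 := hv₀0.trans hzV.le
        nlinarith
      have : ghat g z = z := by
        unfold ghat
        rw [if_neg]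
        push_neg
        intro _
        rw [hz21]; norm_num
      rw [this, hz21]
      linarith
  · -- upper bounds: (ghat z).2 ≤ 1 always on D
    intro b hb
    filter_upwards [self_mem_nhdsWithin] with z hzD
    have h1 : qn (ghat g z) ≤ 1 := ghat_mem_D g hzD
    have h2 : (ghat g z).2 ^ 2 ≤ 1 := by
      simp only [qn] at h1; nlinarith [sq_nonneg (ghat g z).1]
    nlinarith

lemma cwa_ghat_pole (g : (I × ℝ) ≃ₜ (I × ℝ))
    (hg0 : ∀ y : ℝ, g ((0 : I), y) = ((0 : I), y)) :
    ContinuousWithinAt (ghat g) {z : ℝ × ℝ | qn z ≤ 1} ((0 : ℝ), (1 : ℝ)) := by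
  have hval : ghat g ((0 : ℝ), (1 : ℝ)) = ((0 : ℝ), (1 : ℝ)) := by
    unfold ghat
    rw [if_neg]; push_neg; intro _; norm_num
  unfold ContinuousWithinAt
  rw [hval]
  have h2 := tendsto_snd_ghat_pole g hg0
  -- first coordinate tends to 0
  have hbound : ∀ z ∈ {z : ℝ × ℝ | qn z ≤ 1},
      ‖(ghat g z).1‖ ≤ Real.sqrt (2 * (1 - (ghat g z).2)) := by
    intro z hz
    simp only [Set.mem_setOf_eq] at hz
    have h1 : qn (ghat g z) ≤ 1 := ghat_mem_D g hz
    simp only [qn] at h1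
    have h2 : (ghat g z).2 ^ 2 ≤ 1 := by nlinarith [sq_nonneg (ghat g z).1]
    have h3 : -1 ≤ (ghat g z).2 := by nlinarith
    have h4 : (ghat g z).1 ^ 2 ≤ 2 * (1 - (ghat g z).2) := by nlinarith
    calc ‖(ghat g z).1‖ = Real.sqrt ((ghat g z).1 ^ 2) := by
          rw [Real.sqrt_sq_eq_abs]; rfl
    _ ≤ Real.sqrt (2 * (1 - (ghat g z).2)) := Real.sqrt_le_sqrt h4
  have htail : Tendsto (fun z => Real.sqrt (2 * (1 - (ghat g z).2)))
      (𝓝[{z : ℝ × ℝ | qn z ≤ 1}] ((0 : ℝ), (1 : ℝ))) (𝓝 0) := by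
    have harg : Tendsto (fun z => 2 * (1 - (ghat g z).2))
        (𝓝[{z : ℝ × ℝ | qn z ≤ 1}] ((0 : ℝ), (1 : ℝ))) (𝓝 0) := by
      have h3 := ((tendsto_const_nhds (α := ℝ × ℝ) (x := (1:ℝ))
        (f := 𝓝[{z : ℝ × ℝ | qn z ≤ 1}] ((0 : ℝ), (1 : ℝ)))).sub h2).const_mul (2:ℝ)
      rw [show (2:ℝ) * ((1:ℝ) - 1) = 0 by norm_num] at h3
      exact h3
    have hsqrt : Tendsto Real.sqrt (𝓝 0) (𝓝 0) := by
      simpa using (Real.continuous_sqrt.tendsto 0)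
    exact hsqrt.comp harg
  have h1 : Tendsto (fun z => (ghat g z).1)
      (𝓝[{z : ℝ × ℝ | qn z ≤ 1}] ((0 : ℝ), (1 : ℝ))) (𝓝 0) := by
    apply squeeze_zero_norm' _ htail
    filter_upwards [self_mem_nhdsWithin] with z hz
    exact hbound z hz
  have := h1.prodMk_nhds h2
  simpa using this

end Ghat
section GhatCont

open Set Filter Topology unitInterval

/-- Reflection of the strip in the `ℝ` coordinate. -/
def negY : (I × ℝ) ≃ₜ (I × ℝ) := (Homeomorph.refl I).prodCongr (Homeomorph.neg ℝ)

lemma negY_apply (p : I × ℝ) : negY p = (p.1, -p.2) := rfl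

/-- Reflection of the plane in the second coordinate. -/
def RY (z : ℝ × ℝ) : ℝ × ℝ := (z.1, -z.2)

lemma qn_RY (z : ℝ × ℝ) : qn (RY z) = qn z := by simp [qn, RY]

lemma continuous_RY : Continuous RY := by unfold RY; fun_prop

lemma psiInv_RY (z : ℝ × ℝ) : psiInv (RY z) = negY (psiInv z) := by
  simp [psiInv, RY, negY_apply, neg_div]

lemma psiMap_negY (p : I × ℝ) : psiMap (negY p) = RY (psiMap p) := by
  simp [psiMap, RY, negY_apply, neg_div]

lemma ghat_conj (g : I × ℝ → I × ℝ) (z : ℝ × ℝ) :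
    ghat g z = RY (ghat (fun p => negY (g (negY p))) (RY z)) := by
  by_cases hz : qn z ≤ 1 ∧ z.2 ^ 2 < 1
  · have hz' : qn (RY z) ≤ 1 ∧ (RY z).2 ^ 2 < 1 := by
      rw [qn_RY]; exact ⟨hz.1, by simpa [RY] using hz.2⟩
    rw [ghat_eq_of_mem _ hz, ghat_eq_of_mem _ hz', psiInv_RY]
    have h1 : negY (negY (psiInv z)) = psiInv z := by
      simp [negY_apply]
    rw [h1, psiMap_negY]
    have h2 : ∀ w : ℝ × ℝ, RY (RY w) = w := fun w => by simp [RY]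
    rw [h2]
  · have hz' : ¬(qn (RY z) ≤ 1 ∧ (RY z).2 ^ 2 < 1) := by
      rw [qn_RY]
      intro hcon
      exact hz ⟨hcon.1, by simpa [RY] using hcon.2⟩
    rw [ghat, if_neg hz, ghat, if_neg hz']
    simp [RY]

lemma continuous_ghat (g : (I × ℝ) ≃ₜ (I × ℝ))
    (hg0 : ∀ y : ℝ, g ((0 : I), y) = ((0 : I), y))
    (hg1 : ∀ y : ℝ, g ((1 : I), y) = ((1 : I), y)) :
    Continuous (ghat g) := by
  apply continuous_of_closed_pair (s := {z : ℝ × ℝ | qn z ≤ 1}) (t := {z : ℝ × ℝ | 1 ≤ qn z})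
  · exact isClosed_le continuous_qn continuous_const
  · exact isClosed_le continuous_const continuous_qn
  · exact Set.eq_univ_iff_forall.2 fun z => (le_total (qn z) 1).imp id id
  · -- continuity on the disk
    intro z hz
    have hzD : qn z ≤ 1 := hz
    by_cases hp1 : z = ((0 : ℝ), (1 : ℝ))
    · rw [hp1]; exact cwa_ghat_pole g hg0
    by_cases hp2 : z = ((0 : ℝ), (-1 : ℝ))
    · -- south pole: use the reflection trick
      set g' : (I × ℝ) ≃ₜ (I × ℝ) := negY.trans (g.trans negY) with hg'
      have hg'0 : ∀ y : ℝ, g' ((0 : I), y) = ((0 : I), y) := by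
        intro y
        show negY (g (negY ((0 : I), y))) = ((0 : I), y)
        have e1 : negY ((0 : I), y) = ((0 : I), -y) := rfl
        rw [e1, hg0, negY_apply]
        norm_num
      have hcoe : ⇑g' = fun p => negY (g (negY p)) := rfl
      have h1 := cwa_ghat_pole g' hg'0
      have hRD : Set.MapsTo RY {w : ℝ × ℝ | qn w ≤ 1} {w : ℝ × ℝ | qn w ≤ 1} := by
        intro w hw; simpa [qn_RY] using hw
      have h2 : ContinuousWithinAt (fun w => ghat (⇑g') (RY w)) {w : ℝ × ℝ | qn w ≤ 1} z := by
        have hRz : RY z = ((0 : ℝ), (1 : ℝ)) := by rw [hp2]; simp [RY]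
        rw [← hRz] at h1
        exact h1.comp continuous_RY.continuousWithinAt hRD
      have h3 : ContinuousWithinAt (fun w => RY (ghat (⇑g') (RY w)))
          {w : ℝ × ℝ | qn w ≤ 1} z :=
        continuous_RY.continuousAt.comp_continuousWithinAt h2
      have heq : ghat (⇑g) = fun w => RY (ghat (⇑g') (RY w)) := by
        funext w
        rw [hcoe]
        exact ghat_conj (⇑g) w
      rw [heq]
      exact h3
    · -- interior-of-edge points
      have hsq : z.2 ^ 2 < 1 := by
        rcases lt_or_ge (z.2 ^ 2) 1 with h | h
        · exact h
        · exfalso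
          have h1 : z.2 ^ 2 = 1 := by
            simp only [qn] at hzD
            nlinarith [sq_nonneg z.1]
          have h2 : z.1 = 0 := by
            simp only [qn] at hzD
            nlinarith [sq_nonneg z.2]
          have h3 : (z.2 - 1) * (z.2 + 1) = 0 := by nlinarith
          rcases mul_eq_zero.1 h3 with h4 | h4
          · exact hp1 (Prod.ext_iff.2 ⟨h2, show z.2 = 1 by linarith⟩)
          · exact hp2 (Prod.ext_iff.2 ⟨h2, show z.2 = -1 by linarith⟩)
      set U : Set (ℝ × ℝ) := {w : ℝ × ℝ | w.2 ^ 2 < 1} with hU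
      have hUopen : IsOpen U := isOpen_lt (by fun_prop) continuous_const
      have hzU : z ∈ U := hsq
      have hFOn : ContinuousOn (fun w => psiMap (g (psiInv w))) U :=
        continuous_psiMap.comp_continuousOn (g.continuous.comp_continuousOn continuousOn_psiInv)
      have hF : ContinuousWithinAt (fun w => psiMap (g (psiInv w)))
          ({w : ℝ × ℝ | qn w ≤ 1} ∩ U) z :=
        (hFOn.mono Set.inter_subset_right) z ⟨hzD, hzU⟩
      have h4 : ContinuousWithinAt (ghat ⇑g) ({w : ℝ × ℝ | qn w ≤ 1} ∩ U) z := by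
        apply hF.congr
        · intro w hw
          exact ghat_eq_of_mem (⇑g) ⟨hw.1, hw.2⟩
        · exact ghat_eq_of_mem (⇑g) ⟨hzD, hzU⟩
      have hnh : 𝓝[{w : ℝ × ℝ | qn w ≤ 1}] z = 𝓝[{w : ℝ × ℝ | qn w ≤ 1} ∩ U] z :=
        nhdsWithin_restrict _ hzU hUopen
      unfold ContinuousWithinAt
      rw [hnh]
      exact h4
  · -- continuity outside the disk: ghat is the identity there
    exact continuousOn_id.congr fun z hz => ghat_id_of_one_le (⇑g) hg0 hg1 hz

end GhatCont
section Alexander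

open Set Filter Topology unitInterval

lemma continuousOn_union_closed {α β : Type*} [TopologicalSpace α] [TopologicalSpace β]
    {f : α → β} {s t : Set α} (hs : IsClosed s) (ht : IsClosed t)
    (hfs : ContinuousOn f s) (hft : ContinuousOn f t) : ContinuousOn f (s ∪ t) := by
  intro x hx
  have cs : ContinuousWithinAt f s x := by
    by_cases h : x ∈ s
    · exact hfs x h
    · exact continuousWithinAt_of_notMem_closure (by rwa [hs.closure_eq])
  have ct : ContinuousWithinAt f t x := by
    by_cases h : x ∈ t
    · exact hft x h
    · exact continuousWithinAt_of_notMem_closure (by rwa [ht.closure_eq])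
  exact cs.union ct

lemma qn_eq_zero_iff {z : ℝ × ℝ} : qn z = 0 ↔ z = ((0:ℝ), (0:ℝ)) := by
  constructor
  · intro h
    simp only [qn] at h
    have h1 : z.1 = 0 := by nlinarith [sq_nonneg z.1, sq_nonneg z.2]
    have h2 : z.2 = 0 := by nlinarith [sq_nonneg z.1, sq_nonneg z.2]
    exact Prod.ext_iff.2 ⟨h1, h2⟩
  · rintro rfl; simp [qn]

lemma norm_le_one_of_qn_le_one {z : ℝ × ℝ} (h : qn z ≤ 1) : ‖z‖ ≤ 1 := by
  simp only [qn] at h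
  rw [Prod.norm_def]
  have h1 : |z.1| ≤ 1 := by
    rw [abs_le]; constructor <;> nlinarith [sq_nonneg z.1, sq_nonneg z.2]
  have h2 : |z.2| ≤ 1 := by
    rw [abs_le]; constructor <;> nlinarith [sq_nonneg z.1, sq_nonneg z.2]
  exact max_le h1 h2

/-- The Alexander isotopy of the disk associated to `ghat g`. -/
noncomputable def alex (g : I × ℝ → I × ℝ) (t : ℝ) (z : ℝ × ℝ) : ℝ × ℝ :=
  if qn z ≤ t ^ 2 then t • ghat g (t⁻¹ • z) else z

lemma alex_zero (g : I × ℝ → I × ℝ) (z : ℝ × ℝ) : alex g 0 z = z := by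
  unfold alex
  split
  case isTrue h =>
    have h0 : qn z = 0 := le_antisymm (by simpa using h) (qn_nonneg z)
    rw [qn_eq_zero_iff.1 h0, zero_smul]
    rfl
  case isFalse h => rfl

lemma alex_one (g : I × ℝ → I × ℝ) {z : ℝ × ℝ} (hz : qn z ≤ 1) : alex g 1 z = ghat g z := by
  unfold alex
  rw [if_pos (by simpa using hz), inv_one, one_smul, one_smul]

lemma alex_comp (g g' : I × ℝ → I × ℝ) (hgg : ∀ p, g' (g p) = p)
    (t : ℝ) (z : ℝ × ℝ) : alex g' t (alex g t z) = z := by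
  by_cases hc : qn z ≤ t ^ 2
  · by_cases ht0 : t = 0
    · subst ht0
      rw [alex_zero, alex_zero]
    · have hw : qn (t⁻¹ • z) ≤ 1 := by
        rw [qn_smul]
        have ht2 : (0:ℝ) < t ^ 2 := by positivity
        rw [inv_pow]
        calc (t ^ 2)⁻¹ * qn z ≤ (t ^ 2)⁻¹ * t ^ 2 := by
              apply mul_le_mul_of_nonneg_left hc (by positivity)
        _ = 1 := inv_mul_cancel₀ ht2.ne'
      have ha : qn (ghat g (t⁻¹ • z)) ≤ 1 := ghat_mem_D g hw
      have h1 : alex g t z = t • ghat g (t⁻¹ • z) := if_pos hc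
      rw [h1]
      have h2 : qn (t • ghat g (t⁻¹ • z)) ≤ t ^ 2 := by
        rw [qn_smul]
        nlinarith [sq_nonneg t]
      unfold alex
      rw [if_pos h2, smul_smul, inv_mul_cancel₀ ht0, one_smul,
        ghat_ghat g g' hgg, smul_smul, mul_inv_cancel₀ ht0, one_smul]
  · have h1 : alex g t z = z := if_neg hc
    rw [h1]
    exact if_neg hc

lemma alex_mem_Dstar (g : I × ℝ → I × ℝ) {t : ℝ} (ht0 : 0 ≤ t) (ht1 : t ≤ 1)
    {z : ℝ × ℝ} (hz : qn z ≤ 1 ∧ z.2 ^ 2 < 1) :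
    qn (alex g t z) ≤ 1 ∧ (alex g t z).2 ^ 2 < 1 := by
  by_cases hc : qn z ≤ t ^ 2
  · by_cases ht : t = 0
    · subst ht; rw [alex_zero]; exact hz
    · have htpos : 0 < t := lt_of_le_of_ne ht0 (Ne.symm ht)
      have hw : qn (t⁻¹ • z) ≤ 1 := by
        rw [qn_smul, inv_pow]
        have ht2 : (0:ℝ) < t ^ 2 := by positivity
        calc (t ^ 2)⁻¹ * qn z ≤ (t ^ 2)⁻¹ * t ^ 2 :=
              mul_le_mul_of_nonneg_left hc (by positivity)
        _ = 1 := inv_mul_cancel₀ ht2.ne'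
      have ha : qn (ghat g (t⁻¹ • z)) ≤ 1 := ghat_mem_D g hw
      have h1 : alex g t z = t • ghat g (t⁻¹ • z) := if_pos hc
      rw [h1]
      constructor
      · rw [qn_smul]; nlinarith
      · rcases lt_or_eq_of_le ht1 with h | h
        · have h2 : (ghat g (t⁻¹ • z)).2 ^ 2 ≤ 1 := by
            simp only [qn] at ha
            nlinarith [sq_nonneg (ghat g (t⁻¹ • z)).1]
          have h3 : (t • ghat g (t⁻¹ • z)).2 ^ 2 ≤ t ^ 2 := by
            have e : (t • ghat g (t⁻¹ • z)).2 = t * (ghat g (t⁻¹ • z)).2 := rfl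
            rw [e]
            nlinarith
          nlinarith
        · subst h
          rw [inv_one, one_smul, one_smul]
          exact (ghat_mem_Dstar g hz).2
  · rw [alex, if_neg hc]; exact hz

lemma continuousOn_alex (g : (I × ℝ) ≃ₜ (I × ℝ))
    (hg0 : ∀ y : ℝ, g ((0 : I), y) = ((0 : I), y))
    (hg1 : ∀ y : ℝ, g ((1 : I), y) = ((1 : I), y)) :
    ContinuousOn (fun p : ℝ × (ℝ × ℝ) => alex (⇑g) p.1 p.2)
      (Set.Icc (0:ℝ) 1 ×ˢ (Set.univ : Set (ℝ × ℝ))) := by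
  set S1 : Set (ℝ × (ℝ × ℝ)) := {p | 0 ≤ p.1 ∧ qn p.2 ≤ p.1 ^ 2} with hS1
  set S2 : Set (ℝ × (ℝ × ℝ)) := {p | p.1 ^ 2 ≤ qn p.2} with hS2
  have hcl1 : IsClosed S1 := by
    apply IsClosed.inter
    · exact isClosed_le continuous_const continuous_fst
    · exact isClosed_le (continuous_qn.comp continuous_snd) (by fun_prop)
  have hcl2 : IsClosed S2 := isClosed_le (by fun_prop) (continuous_qn.comp continuous_snd)
  have hsub : Set.Icc (0:ℝ) 1 ×ˢ (Set.univ : Set (ℝ × ℝ)) ⊆ S1 ∪ S2 := by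
    rintro ⟨t, z⟩ ⟨⟨ht0, _⟩, _⟩
    rcases le_total (qn z) (t ^ 2) with h | h
    · exact Or.inl ⟨ht0, h⟩
    · exact Or.inr h
  apply ContinuousOn.mono _ hsub
  apply continuousOn_union_closed hcl1 hcl2
  · -- on S1: equal to the rescaled map
    have heq : Set.EqOn (fun p : ℝ × (ℝ × ℝ) => alex (⇑g) p.1 p.2)
        (fun p : ℝ × (ℝ × ℝ) => p.1 • ghat (⇑g) (p.1⁻¹ • p.2)) S1 := by
      intro p hp
      exact if_pos hp.2
    apply ContinuousOn.congr _ heq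
    intro p hp
    by_cases ht : p.1 = 0
    · -- squeeze
      have hz0 : p.2 = ((0:ℝ), (0:ℝ)) := by
        apply qn_eq_zero_iff.1
        apply le_antisymm _ (qn_nonneg _)
        have := hp.2; rw [ht] at this; simpa using this
      have hval : p.1 • ghat (⇑g) (p.1⁻¹ • p.2) = (0 : ℝ × ℝ) := by
        rw [ht, zero_smul]
      have hb : ∀ q ∈ S1, ‖q.1 • ghat (⇑g) (q.1⁻¹ • q.2)‖ ≤ q.1 := by
        intro q hq
        by_cases hq0 : q.1 = 0
        · rw [hq0, zero_smul, norm_zero]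
        · have hqpos : 0 < q.1 := lt_of_le_of_ne hq.1 (Ne.symm hq0)
          have hw : qn (q.1⁻¹ • q.2) ≤ 1 := by
            rw [qn_smul, inv_pow]
            have ht2 : (0:ℝ) < q.1 ^ 2 := by positivity
            calc (q.1 ^ 2)⁻¹ * qn q.2 ≤ (q.1 ^ 2)⁻¹ * q.1 ^ 2 :=
                  mul_le_mul_of_nonneg_left hq.2 (by positivity)
            _ = 1 := inv_mul_cancel₀ ht2.ne'
          have := norm_le_one_of_qn_le_one (ghat_mem_D (⇑g) hw)
          calc ‖q.1 • ghat (⇑g) (q.1⁻¹ • q.2)‖ = |q.1| * ‖ghat (⇑g) (q.1⁻¹ • q.2)‖ := by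
                rw [norm_smul]; rfl
          _ ≤ |q.1| * 1 := by
                apply mul_le_mul_of_nonneg_left this (abs_nonneg _)
          _ = q.1 := by rw [mul_one, abs_of_pos hqpos]
      have hzero : Tendsto (fun q : ℝ × (ℝ × ℝ) => q.1) (𝓝[S1] p) (𝓝 0) := by
        have h' : Tendsto (fun q : ℝ × (ℝ × ℝ) => q.1) (𝓝[S1] p) (𝓝 p.1) :=
          (continuous_fst.tendsto p).mono_left nhdsWithin_le_nhds
        rwa [ht] at h'
      have h0 : Tendsto (fun q : ℝ × (ℝ × ℝ) => q.1 • ghat (⇑g) (q.1⁻¹ • q.2))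
          (𝓝[S1] p) (𝓝 0) := by
        apply squeeze_zero_norm' _ hzero
        filter_upwards [self_mem_nhdsWithin] with q hq
        exact hb q hq
      unfold ContinuousWithinAt
      convert h0 using 2
    · -- continuous at t ≠ 0
      apply ContinuousAt.continuousWithinAt
      have h1 : ContinuousAt (fun q : ℝ × (ℝ × ℝ) => q.1⁻¹ • q.2) p :=
        (continuousAt_fst.inv₀ ht).smul continuousAt_snd
      have h2 : ContinuousAt (fun q : ℝ × (ℝ × ℝ) => ghat (⇑g) (q.1⁻¹ • q.2)) p :=
        ((continuous_ghat g hg0 hg1).continuousAt).comp h1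
      exact continuousAt_fst.smul h2
  · -- on S2: equal to the identity
    have heq : Set.EqOn (fun p : ℝ × (ℝ × ℝ) => alex (⇑g) p.1 p.2)
        (fun p : ℝ × (ℝ × ℝ) => p.2) S2 := by
      intro p hp
      simp only
      unfold alex
      split
      case isTrue h =>
        have hq : qn p.2 = p.1 ^ 2 := le_antisymm h hp
        by_cases ht : p.1 = 0
        · have : qn p.2 = 0 := by rw [hq, ht]; ring
          rw [qn_eq_zero_iff.1 this, ht, zero_smul]
          rfl
        · have hw : qn (p.1⁻¹ • p.2) = 1 := by
            rw [qn_smul, hq, inv_pow]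
            field_simp
          rw [ghat_id_of_one_le (⇑g) hg0 hg1 hw.ge, smul_smul, mul_inv_cancel₀ ht, one_smul]
      case isFalse h => rfl
    exact (continuous_snd.continuousOn).congr heq

/-- The isotopy of the strip obtained by conjugating the Alexander isotopy. -/
noncomputable def GG (g : I × ℝ → I × ℝ) (s : ℝ) (p : I × ℝ) : I × ℝ :=
  psiInv (alex g s (psiMap p))

lemma GG_zero (g : I × ℝ → I × ℝ) (p : I × ℝ) : GG g 0 p = p := by
  rw [GG, alex_zero, psiInv_psiMap]

lemma GG_one (g : I × ℝ → I × ℝ) (p : I × ℝ) : GG g 1 p = g p := by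
  rw [GG, alex_one g (psiMap_mem p).1, ghat_eq_of_mem g (psiMap_mem p), psiInv_psiMap,
    psiInv_psiMap]

lemma GG_GG (g g' : I × ℝ → I × ℝ) (hgg : ∀ p, g' (g p) = p) {t : ℝ}
    (ht0 : 0 ≤ t) (ht1 : t ≤ 1) (p : I × ℝ) : GG g' t (GG g t p) = p := by
  unfold GG
  rw [psiMap_psiInv (alex_mem_Dstar g ht0 ht1 (psiMap_mem p)).1
      (alex_mem_Dstar g ht0 ht1 (psiMap_mem p)).2,
    alex_comp g g' hgg, psiInv_psiMap]

lemma continuousOn_GG (g : (I × ℝ) ≃ₜ (I × ℝ))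
    (hg0 : ∀ y : ℝ, g ((0 : I), y) = ((0 : I), y))
    (hg1 : ∀ y : ℝ, g ((1 : I), y) = ((1 : I), y)) :
    ContinuousOn (fun q : ℝ × (I × ℝ) => GG (⇑g) q.1 q.2)
      (Set.Icc (0:ℝ) 1 ×ˢ (Set.univ : Set (I × ℝ))) := by
  have hinner : ContinuousOn (fun q : ℝ × (I × ℝ) => alex (⇑g) q.1 (psiMap q.2))
      (Set.Icc (0:ℝ) 1 ×ˢ (Set.univ : Set (I × ℝ))) := by
    have hmap : Continuous (fun q : ℝ × (I × ℝ) => (q.1, psiMap q.2)) :=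
      continuous_fst.prodMk (continuous_psiMap.comp continuous_snd)
    apply (continuousOn_alex g hg0 hg1).comp hmap.continuousOn
    rintro ⟨t, p⟩ ⟨ht, _⟩
    exact ⟨ht, Set.mem_univ _⟩
  apply continuousOn_psiInv.comp hinner
  rintro ⟨t, p⟩ ⟨ht, _⟩
  exact (alex_mem_Dstar (⇑g) ht.1 ht.2 (psiMap_mem p)).2


set_option maxHeartbeats 1000000 in
lemma isHomeomorph_GG (g : (I × ℝ) ≃ₜ (I × ℝ))
    (hg0 : ∀ y : ℝ, g ((0 : I), y) = ((0 : I), y))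
    (hg1 : ∀ y : ℝ, g ((1 : I), y) = ((1 : I), y))
    {t : ℝ} (ht0 : 0 ≤ t) (ht1 : t ≤ 1) : IsHomeomorph (GG (⇑g) t) := by
  have hsymm0 : ∀ y : ℝ, g.symm ((0 : I), y) = ((0 : I), y) := by
    intro y
    have h := congrArg g.symm (hg0 y)
    rw [Homeomorph.symm_apply_apply] at h
    exact h.symm
  have hsymm1 : ∀ y : ℝ, g.symm ((1 : I), y) = ((1 : I), y) := by
    intro y
    have h := congrArg g.symm (hg1 y)
    rw [Homeomorph.symm_apply_apply] at h
    exact h.symm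
  have hslice : ∀ g₀ : (I × ℝ) ≃ₜ (I × ℝ), (∀ y : ℝ, g₀ ((0 : I), y) = ((0 : I), y)) →
      (∀ y : ℝ, g₀ ((1 : I), y) = ((1 : I), y)) → Continuous (GG (⇑g₀) t) := by
    intro g₀ h0 h1
    have hmaps : ∀ p : I × ℝ, ((t, p) : ℝ × (I × ℝ)) ∈
        Set.Icc (0:ℝ) 1 ×ˢ (Set.univ : Set (I × ℝ)) :=
      fun p => ⟨⟨ht0, ht1⟩, Set.mem_univ _⟩
    have hcc : Continuous (fun p : I × ℝ => ((t, p) : ℝ × (I × ℝ))) :=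
      continuous_const.prodMk continuous_id
    have h2 : Continuous ((fun q : ℝ × (I × ℝ) => GG (⇑g₀) q.1 q.2) ∘
        (fun p : I × ℝ => ((t, p) : ℝ × (I × ℝ)))) :=
      (continuousOn_GG g₀ h0 h1).comp_continuous hcc hmaps
    exact h2
  rw [isHomeomorph_iff_exists_inverse]
  refine ⟨hslice g hg0 hg1, GG (⇑g.symm) t, ?_, ?_, hslice g.symm hsymm0 hsymm1⟩
  · intro p
    exact GG_GG (⇑g) (⇑g.symm) (fun q => g.symm_apply_apply q) ht0 ht1 p
  · intro p
    exact GG_GG (⇑g.symm) (⇑g) (fun q => g.apply_symm_apply q) ht0 ht1 p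


end Alexander
section Straighten

open Set Filter Topology unitInterval

/-- The straightening interpolation between the identity and the boundary map of `h`. -/
noncomputable def LL (φ0 φ1 : ℝ → ℝ) (s : ℝ) (p : I × ℝ) : I × ℝ :=
  (p.1, (1 - s) * p.2 + s * ((1 - (p.1 : ℝ)) * φ0 p.2 + (p.1 : ℝ) * φ1 p.2))

lemma continuous_LL (φ0 φ1 : ℝ → ℝ) (hc0 : Continuous φ0) (hc1 : Continuous φ1) :
    Continuous (fun q : ℝ × (I × ℝ) => LL φ0 φ1 q.1 q.2) := by
  unfold LL
  apply Continuous.prodMk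
  · exact continuous_fst.comp continuous_snd
  · have hx : Continuous (fun q : ℝ × (I × ℝ) => ((q.2.1 : ℝ))) :=
      continuous_subtype_val.comp (continuous_fst.comp continuous_snd)
    have hy : Continuous (fun q : ℝ × (I × ℝ) => q.2.2) :=
      continuous_snd.comp continuous_snd
    fun_prop

lemma LL_snd_ge (φ0 φ1 : ℝ → ℝ) {s : ℝ} (hs0 : 0 ≤ s) (hs1 : s ≤ 1) (x : I) (y M : ℝ)
    (h1 : M ≤ y) (h2 : M ≤ φ0 y) (h3 : M ≤ φ1 y) :
    M ≤ (1 - s) * y + s * ((1 - (x : ℝ)) * φ0 y + (x : ℝ) * φ1 y) := by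
  have hx0 : (0:ℝ) ≤ x := x.2.1
  have hx1 : (x:ℝ) ≤ 1 := x.2.2
  have t1 : 0 ≤ (1 - s) * (y - M) := mul_nonneg (by linarith) (by linarith)
  have t2 : 0 ≤ s * (1 - (x:ℝ)) * (φ0 y - M) :=
    mul_nonneg (mul_nonneg hs0 (by linarith)) (by linarith)
  have t3 : 0 ≤ s * (x:ℝ) * (φ1 y - M) :=
    mul_nonneg (mul_nonneg hs0 hx0) (by linarith)
  nlinarith

lemma LL_snd_le (φ0 φ1 : ℝ → ℝ) {s : ℝ} (hs0 : 0 ≤ s) (hs1 : s ≤ 1) (x : I) (y M : ℝ)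
    (h1 : y ≤ M) (h2 : φ0 y ≤ M) (h3 : φ1 y ≤ M) :
    (1 - s) * y + s * ((1 - (x : ℝ)) * φ0 y + (x : ℝ) * φ1 y) ≤ M := by
  have hx0 : (0:ℝ) ≤ x := x.2.1
  have hx1 : (x:ℝ) ≤ 1 := x.2.2
  have t1 : 0 ≤ (1 - s) * (M - y) := mul_nonneg (by linarith) (by linarith)
  have t2 : 0 ≤ s * (1 - (x:ℝ)) * (M - φ0 y) :=
    mul_nonneg (mul_nonneg hs0 (by linarith)) (by linarith)
  have t3 : 0 ≤ s * (x:ℝ) * (M - φ1 y) :=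
    mul_nonneg (mul_nonneg hs0 hx0) (by linarith)
  nlinarith

lemma LL_strictMono (φ0 φ1 : ℝ → ℝ) (hm0 : StrictMono φ0) (hm1 : StrictMono φ1)
    {s : ℝ} (hs0 : 0 ≤ s) (hs1 : s ≤ 1) (x : I) :
    StrictMono (fun y => (1 - s) * y + s * ((1 - (x : ℝ)) * φ0 y + (x : ℝ) * φ1 y)) := by
  intro a b hab
  have hx0 : (0:ℝ) ≤ x := x.2.1
  have hx1 : (x:ℝ) ≤ 1 := x.2.2
  have e0 : φ0 a < φ0 b := hm0 hab
  have e1 : φ1 a < φ1 b := hm1 hab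
  simp only
  rcases eq_or_lt_of_le hs1 with rfl | hs
  · -- s = 1
    by_cases hx : (x : ℝ) < 1
    · have t2 : 0 < (1 - (x:ℝ)) * (φ0 b - φ0 a) := mul_pos (by linarith) (by linarith)
      have t3 : 0 ≤ (x:ℝ) * (φ1 b - φ1 a) := mul_nonneg hx0 (by linarith)
      nlinarith
    · have hxe : (x:ℝ) = 1 := le_antisymm hx1 (not_lt.1 hx)
      rw [hxe]; nlinarith
  · -- s < 1
    have t1 : 0 < (1 - s) * (b - a) := mul_pos (by linarith) (by linarith)
    have t2 : 0 ≤ s * (1 - (x:ℝ)) * (φ0 b - φ0 a) :=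
      mul_nonneg (mul_nonneg hs0 (by linarith)) (by linarith)
    have t3 : 0 ≤ s * (x:ℝ) * (φ1 b - φ1 a) :=
      mul_nonneg (mul_nonneg hs0 hx0) (by linarith)
    nlinarith

lemma isHomeomorph_LL (φ0 φ1 : ℝ → ℝ) (hc0 : Continuous φ0) (hc1 : Continuous φ1)
    (hm0 : StrictMono φ0) (hm1 : StrictMono φ1)
    (ht0 : Tendsto φ0 atTop atTop) (hb0 : Tendsto φ0 atBot atBot)
    (ht1 : Tendsto φ1 atTop atTop) (hb1 : Tendsto φ1 atBot atBot)
    {s : ℝ} (hs0 : 0 ≤ s) (hs1 : s ≤ 1) : IsHomeomorph (LL φ0 φ1 s) := by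
  have hψc : ∀ x : I, Continuous
      (fun y => (1 - s) * y + s * ((1 - (x : ℝ)) * φ0 y + (x : ℝ) * φ1 y)) := by
    intro x; fun_prop
  have hψtop : ∀ x : I, Tendsto
      (fun y => (1 - s) * y + s * ((1 - (x : ℝ)) * φ0 y + (x : ℝ) * φ1 y)) atTop atTop := by
    intro x
    rw [tendsto_atTop]
    intro M
    filter_upwards [eventually_ge_atTop M, ht0.eventually (eventually_ge_atTop M),
      ht1.eventually (eventually_ge_atTop M)] with y h1 h2 h3
    exact LL_snd_ge φ0 φ1 hs0 hs1 x y M h1 h2 h3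
  have hψbot : ∀ x : I, Tendsto
      (fun y => (1 - s) * y + s * ((1 - (x : ℝ)) * φ0 y + (x : ℝ) * φ1 y)) atBot atBot := by
    intro x
    rw [tendsto_atBot]
    intro M
    filter_upwards [eventually_le_atBot M, hb0.eventually (eventually_le_atBot M),
      hb1.eventually (eventually_le_atBot M)] with y h1 h2 h3
    exact LL_snd_le φ0 φ1 hs0 hs1 x y M h1 h2 h3
  have hψsurj : ∀ x : I, Function.Surjective
      (fun y => (1 - s) * y + s * ((1 - (x : ℝ)) * φ0 y + (x : ℝ) * φ1 y)) :=
    fun x => (hψc x).surjective (hψtop x) (hψbot x)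
  have hbij : Function.Bijective (LL φ0 φ1 s) := by
    constructor
    · rintro ⟨x1, y1⟩ ⟨x2, y2⟩ hpq
      have hfst : x1 = x2 := congrArg Prod.fst hpq
      subst hfst
      have hsnd := congrArg Prod.snd hpq
      simp only [LL] at hsnd
      have := (LL_strictMono φ0 φ1 hm0 hm1 hs0 hs1 x1).injective hsnd
      rw [this]
    · rintro ⟨x, z⟩
      obtain ⟨y, hy⟩ := hψsurj x z
      exact ⟨(x, y), Prod.ext_iff.2 ⟨rfl, hy⟩⟩
  have hcont : Continuous (LL φ0 φ1 s) := by
    have h2 : Continuous ((fun q : ℝ × (I × ℝ) => LL φ0 φ1 q.1 q.2) ∘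
        (fun p : I × ℝ => ((s, p) : ℝ × (I × ℝ)))) :=
      (continuous_LL φ0 φ1 hc0 hc1).comp (continuous_const.prodMk continuous_id)
    exact h2
  apply isHomeomorph_strip_of_bijective hcont hbij
  intro K hK
  obtain ⟨a, ha⟩ := exists_bound_of_compact hK continuous_snd
  obtain ⟨b1, hb1'⟩ := eventually_atTop.1
    ((eventually_gt_atTop a).and ((ht0.eventually (eventually_gt_atTop a)).and
      (ht1.eventually (eventually_gt_atTop a))))
  obtain ⟨b2, hb2'⟩ := eventually_atBot.1
    ((eventually_lt_atBot (-a)).and ((hb0.eventually (eventually_lt_atBot (-a))).and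
      (hb1.eventually (eventually_lt_atBot (-a)))))
  apply IsCompact.of_isClosed_subset (isCompact_slab b2 b1)
    (hK.isClosed.preimage hcont)
  rintro ⟨x, y⟩ hxy
  have hmem := ha _ hxy
  simp only [LL] at hmem
  have hy2 : |(1 - s) * y + s * ((1 - (x : ℝ)) * φ0 y + (x : ℝ) * φ1 y)| ≤ a := hmem
  rw [abs_le] at hy2
  constructor
  · exact Set.mem_univ _
  · constructor
    · -- b2 ≤ y
      by_contra hc
      push_neg at hc
      have h4 := hb2' y hc.le
      have := LL_snd_le φ0 φ1 hs0 hs1 x y (-a) h4.1.le h4.2.1.le h4.2.2.le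
      -- but also -a ≤ value
      rcases lt_or_ge y b2 with _ | _
      · have h6 : (1 - s) * y + s * ((1 - (x : ℝ)) * φ0 y + (x : ℝ) * φ1 y) < -a := by
          have t1 := hb2' y hc.le
          -- strict version: use LL_snd_le with strict endpoints
          have := LL_snd_le φ0 φ1 hs0 hs1 x y (max y (max (φ0 y) (φ1 y)))
            (le_max_left _ _) ((le_max_left _ _).trans (le_max_right _ _))
            ((le_max_right _ _).trans (le_max_right _ _))
          have hmax : max y (max (φ0 y) (φ1 y)) < -a :=
            max_lt t1.1 (max_lt t1.2.1 t1.2.2)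
          linarith
        linarith [hy2.1]
      · linarith
    · -- y ≤ b1
      by_contra hc
      push_neg at hc
      have h4 := hb1' y hc.le
      have h6 : a < (1 - s) * y + s * ((1 - (x : ℝ)) * φ0 y + (x : ℝ) * φ1 y) := by
        have := LL_snd_ge φ0 φ1 hs0 hs1 x y (min y (min (φ0 y) (φ1 y)))
          (min_le_left _ _) ((min_le_right _ _).trans (min_le_left _ _))
          ((min_le_right _ _).trans (min_le_right _ _))
        have hmin : a < min y (min (φ0 y) (φ1 y)) :=
          lt_min h4.1 (lt_min h4.2.1 h4.2.2)
        linarith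
      linarith [hy2.2]

end Straighten
/-- Every homeomorphism of the doubly infinite closed strip `[0,1] × ℝ` that is properly
homotopic to the identity rel boundary is isotopic to the identity. -/
theorem homeomorph_strip_properly_homotopic_to_id_isotopic_to_id
    (h : Homeomorph (I × ℝ) (I × ℝ))
    (H : I × (I × ℝ) → I × ℝ)
    (Hcont : Continuous H)
    (H0 : ∀ p, H (0, p) = h p)
    (H1 : ∀ p, H (1, p) = p)
    (Hproper : IsProperMap H)
    (Hbd : ∀ (t : I) (p : I × ℝ),
      ((p.1 : ℝ) = 0 ∨ (p.1 : ℝ) = 1) →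
        (((H (t, p)).1 : ℝ) = 0 ∨ ((H (t, p)).1 : ℝ) = 1)) :
    ∃ F : I × (I × ℝ) → I × ℝ, Continuous F ∧
      (∀ p, F (0, p) = h p) ∧
      (∀ p, F (1, p) = p) ∧
      (∀ t : I, IsHomeomorph fun p => F (t, p)) := by
  classical
  -- Step 1: the homotopy, hence `h`, preserves the two boundary lines.
  have hA : ∀ p : I × ℝ, ((p.1 : ℝ) = 0 ∨ (p.1 : ℝ) = 1) →
      ∀ t : I, ((H (t, p)).1 : ℝ) = (p.1 : ℝ) := by
    intro p hp
    have hf : Continuous (fun t : I => ((H (t, p)).1 : ℝ)) :=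
      continuous_subtype_val.comp
        (continuous_fst.comp (Hcont.comp (continuous_id.prodMk continuous_const)))
    have himg : IsPreconnected ((fun t : I => ((H (t, p)).1 : ℝ)) '' Set.univ) :=
      isPreconnected_univ.image _ hf.continuousOn
    have half : ∀ t₀ t₁ : I, ((H (t₀, p)).1 : ℝ) = 0 → ((H (t₁, p)).1 : ℝ) = 1 → False := by
      intro t₀ t₁ h₀ h₁
      have hsub := himg.Icc_subset ⟨t₀, Set.mem_univ _, h₀⟩ ⟨t₁, Set.mem_univ _, h₁⟩
      obtain ⟨t', _, ht'⟩ := hsub (by norm_num : (1/2 : ℝ) ∈ Set.Icc (0:ℝ) 1)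
      have ht'' : ((H (t', p)).1 : ℝ) = 1/2 := ht'
      rcases Hbd t' p hp with hc | hc <;> rw [ht''] at hc <;> norm_num at hc
    intro t
    have hH1 : ((H (1, p)).1 : ℝ) = (p.1 : ℝ) := by rw [H1]
    rcases Hbd t p hp with h1 | h1 <;> rcases Hbd 1 p hp with h2 | h2
    · rw [h1, ← hH1, h2]
    · exact (half t 1 h1 h2).elim
    · exact (half 1 t h2 h1).elim
    · rw [h1, ← hH1, h2]
  have hA0 : ∀ p : I × ℝ, ((p.1 : ℝ) = 0 ∨ (p.1 : ℝ) = 1) → ((h p).1 : ℝ) = (p.1 : ℝ) := by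
    intro p hp
    have := hA p hp 0
    rwa [H0] at this
  -- Step 2: boundary maps of `h` are increasing homeomorphisms of `ℝ`.
  have hside : ∀ e : I, ((e : ℝ) = 0 ∨ (e : ℝ) = 1) →
      Continuous (fun y : ℝ => (h (e, y)).2) ∧ StrictMono (fun y : ℝ => (h (e, y)).2) ∧
      Tendsto (fun y : ℝ => (h (e, y)).2) atTop atTop ∧
      Tendsto (fun y : ℝ => (h (e, y)).2) atBot atBot := by
    intro e he
    have hcont : Continuous (fun y : ℝ => (h (e, y)).2) :=
      continuous_snd.comp (h.continuous.comp (continuous_const.prodMk continuous_id))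
    have hinj : Function.Injective (fun y : ℝ => (h (e, y)).2) := by
      intro y1 y2 hyy
      have h1 : (h (e, y1)).1 = (h (e, y2)).1 := by
        apply Subtype.ext
        rw [hA0 (e, y1) he, hA0 (e, y2) he]
      have h2 : h (e, y1) = h (e, y2) := Prod.ext_iff.2 ⟨h1, hyy⟩
      have h3 := h.injective h2
      exact congrArg Prod.snd h3
    obtain ⟨B, hB⟩ := exists_bound_of_compact
      (Hproper.isCompact_preimage
        (isCompact_univ.prod isCompact_singleton :
          IsCompact ((Set.univ : Set I) ×ˢ ({0} : Set ℝ))))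
      ((continuous_snd.comp continuous_snd : Continuous fun q : I × (I × ℝ) => q.2.2))
    have hBpos : 0 ≤ B := by
      have hm : ((1 : I), ((0 : I), (0 : ℝ))) ∈
          H ⁻¹' ((Set.univ : Set I) ×ˢ ({0} : Set ℝ)) := by
        refine Set.mem_preimage.2 ⟨Set.mem_univ _, ?_⟩
        rw [H1]
        rfl
      have := hB _ hm
      simpa using this
    -- sign control from the rel-boundary proper homotopy
    have hcross : ∀ y : ℝ, (∃ t' : I, (H (t', (e, y))).2 = 0) → |y| ≤ B := by
      intro y ⟨t', ht'⟩
      have hm : (t', ((e : I), y)) ∈ H ⁻¹' ((Set.univ : Set I) ×ˢ ({0} : Set ℝ)) :=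
        Set.mem_preimage.2 ⟨Set.mem_univ _, ht'⟩
      exact hB _ hm
    have hpos : ∀ y : ℝ, B < y → 0 < (h (e, y)).2 := by
      intro y hy
      by_contra hcon
      push_neg at hcon
      have hψ : Continuous (fun t : I => (H (t, (e, y))).2) :=
        continuous_snd.comp (Hcont.comp (continuous_id.prodMk continuous_const))
      have himg : IsPreconnected ((fun t : I => (H (t, (e, y))).2) '' Set.univ) :=
        isPreconnected_univ.image _ hψ.continuousOn
      have hsub := himg.Icc_subset
        (⟨0, Set.mem_univ _, rfl⟩ : ∃ x ∈ Set.univ, (fun t : I => (H (t, (e, y))).2) x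
          = (fun t : I => (H (t, (e, y))).2) 0)
        (⟨1, Set.mem_univ _, rfl⟩ : ∃ x ∈ Set.univ, (fun t : I => (H (t, (e, y))).2) x
          = (fun t : I => (H (t, (e, y))).2) 1)
      have h0mem : (0 : ℝ) ∈ Set.Icc ((fun t : I => (H (t, (e, y))).2) 0)
          ((fun t : I => (H (t, (e, y))).2) 1) := by
        constructor
        · show (H (0, (e, y))).2 ≤ 0
          rw [H0]; exact hcon
        · show (0 : ℝ) ≤ (H (1, (e, y))).2
          rw [H1]; exact (hBpos.trans hy.le)
      obtain ⟨t', _, ht'⟩ := hsub h0mem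
      have := hcross y ⟨t', ht'⟩
      have : y ≤ B := le_trans (le_abs_self _) this
      linarith
    have hneg : ∀ y : ℝ, y < -B → (h (e, y)).2 < 0 := by
      intro y hy
      by_contra hcon
      push_neg at hcon
      have hψ : Continuous (fun t : I => (H (t, (e, y))).2) :=
        continuous_snd.comp (Hcont.comp (continuous_id.prodMk continuous_const))
      have himg : IsPreconnected ((fun t : I => (H (t, (e, y))).2) '' Set.univ) :=
        isPreconnected_univ.image _ hψ.continuousOn
      have hsub := himg.Icc_subset
        (⟨1, Set.mem_univ _, rfl⟩ : ∃ x ∈ Set.univ, (fun t : I => (H (t, (e, y))).2) x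
          = (fun t : I => (H (t, (e, y))).2) 1)
        (⟨0, Set.mem_univ _, rfl⟩ : ∃ x ∈ Set.univ, (fun t : I => (H (t, (e, y))).2) x
          = (fun t : I => (H (t, (e, y))).2) 0)
      have h0mem : (0 : ℝ) ∈ Set.Icc ((fun t : I => (H (t, (e, y))).2) 1)
          ((fun t : I => (H (t, (e, y))).2) 0) := by
        constructor
        · show (H (1, (e, y))).2 ≤ 0
          rw [H1]
          have : (0:ℝ) ≤ B := hBpos
          show y ≤ 0
          linarith
        · show (0 : ℝ) ≤ (H (0, (e, y))).2
          rw [H0]; exact hcon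
      obtain ⟨t', _, ht'⟩ := hsub h0mem
      have := hcross y ⟨t', ht'⟩
      have : -B ≤ y := neg_le_of_abs_le this
      linarith
    have htopφ : Tendsto (fun y : ℝ => (h (e, y)).2) atTop atTop := by
      rw [tendsto_atTop]
      intro M
      obtain ⟨C, hC⟩ := exists_bound_of_compact
        (h.isProperMap.isCompact_preimage (isCompact_slab (-|M|) |M|)) continuous_snd
      filter_upwards [eventually_gt_atTop (max B C)] with y hy
      have hyB : B < y := lt_of_le_of_lt (le_max_left _ _) hy
      have hpos' := hpos y hyB
      have hnot : (h (e, y)).2 ∉ Set.Icc (-|M|) |M| := by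
        intro hmem
        have hpre : ((e, y) : I × ℝ) ∈ ⇑h ⁻¹' ((Set.univ : Set I) ×ˢ Set.Icc (-|M|) |M|) :=
          Set.mem_preimage.2 ⟨Set.mem_univ _, hmem⟩
        have h5 := hC _ hpre
        have h6 : y ≤ C := le_trans (le_abs_self _) h5
        have h7 : C < y := lt_of_le_of_lt (le_max_right B C) hy
        linarith
      have h8 : |M| < (h (e, y)).2 := by
        rcases lt_or_ge |M| ((h (e, y)).2) with hlt | hle
        · exact hlt
        · exact absurd ⟨by linarith [abs_nonneg M], hle⟩ hnot
      linarith [le_abs_self M]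
    have hbotφ : Tendsto (fun y : ℝ => (h (e, y)).2) atBot atBot := by
      rw [tendsto_atBot]
      intro M
      obtain ⟨C, hC⟩ := exists_bound_of_compact
        (h.isProperMap.isCompact_preimage (isCompact_slab (-|M|) |M|)) continuous_snd
      filter_upwards [eventually_lt_atBot (min (-B) (-C))] with y hy
      have hyB : y < -B := lt_of_lt_of_le hy (min_le_left _ _)
      have hneg' := hneg y hyB
      have hnot : (h (e, y)).2 ∉ Set.Icc (-|M|) |M| := by
        intro hmem
        have hpre : ((e, y) : I × ℝ) ∈ ⇑h ⁻¹' ((Set.univ : Set I) ×ˢ Set.Icc (-|M|) |M|) :=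
          Set.mem_preimage.2 ⟨Set.mem_univ _, hmem⟩
        have h5 := hC _ hpre
        have h6 : -C ≤ y := neg_le_of_abs_le h5
        have h7 : y < -C := lt_of_lt_of_le hy (min_le_right _ _)
        linarith
      have h8 : (h (e, y)).2 < -|M| := by
        rcases lt_or_ge ((h (e, y)).2) (-|M|) with hlt | hle
        · exact hlt
        · exact absurd ⟨hle, by linarith [abs_nonneg M]⟩ hnot
      linarith [neg_abs_le M]
    exact ⟨hcont, strictMono_of_cont_inj_tendsto hcont hinj htopφ, htopφ, hbotφ⟩
  have he0 : (((0 : I) : ℝ) = 0 ∨ ((0 : I) : ℝ) = 1) := Or.inl rfl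
  have he1 : (((1 : I) : ℝ) = 0 ∨ ((1 : I) : ℝ) = 1) := Or.inr rfl
  obtain ⟨hc0, hm0, htop0, hbot0⟩ := hside 0 he0
  obtain ⟨hc1, hm1, htop1, hbot1⟩ := hside 1 he1
  set φ0 : ℝ → ℝ := fun y => (h ((0 : I), y)).2 with hφ0
  set φ1 : ℝ → ℝ := fun y => (h ((1 : I), y)).2 with hφ1
  -- Step 3: straightening homeomorphism
  have hLL1 : IsHomeomorph (LL φ0 φ1 1) :=
    isHomeomorph_LL φ0 φ1 hc0 hc1 hm0 hm1 htop0 hbot0 htop1 hbot1 zero_le_one le_rfl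
  set Lh : (I × ℝ) ≃ₜ (I × ℝ) := hLL1.homeomorph (LL φ0 φ1 1) with hLh
  have hLh_coe : ⇑Lh = LL φ0 φ1 1 := rfl
  set g : (I × ℝ) ≃ₜ (I × ℝ) := h.trans Lh.symm with hgdef
  have hg_coe : ∀ p, g p = Lh.symm (h p) := fun p => rfl
  have hg0 : ∀ y : ℝ, g ((0 : I), y) = ((0 : I), y) := by
    intro y
    have hcalc : Lh ((0 : I), y) = ((0 : I), φ0 y) := by
      rw [hLh_coe]
      unfold LL
      rw [Prod.mk.injEq]
      refine ⟨rfl, ?_⟩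
      have he : (((0 : I) : ℝ)) = 0 := rfl
      rw [he]; ring
    have hh : h ((0 : I), y) = ((0 : I), φ0 y) :=
      Prod.ext_iff.2 ⟨Subtype.ext (hA0 ((0 : I), y) he0), rfl⟩
    rw [hg_coe, hh, ← hcalc, Homeomorph.symm_apply_apply]
  have hg1 : ∀ y : ℝ, g ((1 : I), y) = ((1 : I), y) := by
    intro y
    have hcalc : Lh ((1 : I), y) = ((1 : I), φ1 y) := by
      rw [hLh_coe]
      unfold LL
      rw [Prod.mk.injEq]
      refine ⟨rfl, ?_⟩
      have he : (((1 : I) : ℝ)) = 1 := rfl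
      rw [he]; ring
    have hh : h ((1 : I), y) = ((1 : I), φ1 y) :=
      Prod.ext_iff.2 ⟨Subtype.ext (hA0 ((1 : I), y) he1), rfl⟩
    rw [hg_coe, hh, ← hcalc, Homeomorph.symm_apply_apply]
  -- Step 4: assemble the isotopy
  refine ⟨fun q => LL φ0 φ1 (min 1 (2 - 2 * ((q.1 : ℝ))))
      (GG (⇑g) (max 0 (1 - 2 * ((q.1 : ℝ)))) q.2), ?_, ?_, ?_, ?_⟩
  · -- continuity
    have hin : Continuous (fun q : I × (I × ℝ) =>
        ((max 0 (1 - 2 * ((q.1 : ℝ))), q.2) : ℝ × (I × ℝ))) := by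
      apply Continuous.prodMk
      · exact (continuous_const.max ((continuous_const.sub
          (continuous_const.mul (continuous_subtype_val.comp continuous_fst)))))
      · exact continuous_snd
    have hmaps : ∀ q : I × (I × ℝ),
        ((max 0 (1 - 2 * ((q.1 : ℝ))), q.2) : ℝ × (I × ℝ)) ∈
          Set.Icc (0:ℝ) 1 ×ˢ (Set.univ : Set (I × ℝ)) := by
      intro q
      have h1 : (0:ℝ) ≤ (q.1 : ℝ) := q.1.2.1
      exact ⟨⟨le_max_left _ _, max_le (by norm_num) (by linarith)⟩, Set.mem_univ _⟩
    have hGGc : Continuous ((fun r : ℝ × (I × ℝ) => GG (⇑g) r.1 r.2) ∘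
        (fun q : I × (I × ℝ) => ((max 0 (1 - 2 * ((q.1 : ℝ))), q.2) : ℝ × (I × ℝ)))) :=
      (continuousOn_GG g hg0 hg1).comp_continuous hin hmaps
    have hminc : Continuous (fun q : I × (I × ℝ) => min 1 (2 - 2 * ((q.1 : ℝ)))) :=
      continuous_const.min ((continuous_const.sub
        (continuous_const.mul (continuous_subtype_val.comp continuous_fst))))
    have hout : Continuous ((fun r : ℝ × (I × ℝ) => LL φ0 φ1 r.1 r.2) ∘
        (fun q : I × (I × ℝ) => ((min 1 (2 - 2 * ((q.1 : ℝ))),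
          GG (⇑g) (max 0 (1 - 2 * ((q.1 : ℝ)))) q.2) : ℝ × (I × ℝ)))) :=
      (continuous_LL φ0 φ1 hc0 hc1).comp (hminc.prodMk hGGc)
    exact hout
  · -- at time 0 it is `h`
    intro p
    show LL φ0 φ1 (min 1 (2 - 2 * (((0 : I) : ℝ))))
        (GG (⇑g) (max 0 (1 - 2 * (((0 : I) : ℝ)))) p) = h p
    have e0 : (((0 : I)) : ℝ) = 0 := rfl
    rw [e0]
    rw [show min (1:ℝ) (2 - 2 * 0) = 1 by norm_num,
      show max (0:ℝ) (1 - 2 * 0) = 1 by norm_num]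
    rw [GG_one]
    show Lh (g p) = h p
    rw [hg_coe]
    exact Lh.apply_symm_apply (h p)
  · -- at time 1 it is the identity
    intro p
    show LL φ0 φ1 (min 1 (2 - 2 * (((1 : I) : ℝ))))
        (GG (⇑g) (max 0 (1 - 2 * (((1 : I) : ℝ)))) p) = p
    have e1 : (((1 : I)) : ℝ) = 1 := rfl
    rw [e1]
    rw [show min (1:ℝ) (2 - 2 * 1) = 0 by norm_num,
      show max (0:ℝ) (1 - 2 * 1) = 0 by norm_num]
    rw [GG_zero]
    unfold LL
    refine Prod.ext_iff.2 ⟨rfl, ?_⟩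
    show (1 - 0) * p.2 + 0 * ((1 - (p.1 : ℝ)) * φ0 p.2 + (p.1 : ℝ) * φ1 p.2) = p.2
    ring
  · -- each time slice is a homeomorphism
    intro t
    have ht0 : (0:ℝ) ≤ (t : ℝ) := t.2.1
    have ht1 : (t : ℝ) ≤ 1 := t.2.2
    have ha0 : (0:ℝ) ≤ min 1 (2 - 2 * (t : ℝ)) := le_min zero_le_one (by linarith)
    have ha1 : min (1:ℝ) (2 - 2 * (t : ℝ)) ≤ 1 := min_le_left _ _
    have hb0 : (0:ℝ) ≤ max 0 (1 - 2 * (t : ℝ)) := le_max_left _ _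
    have hb1 : max (0:ℝ) (1 - 2 * (t : ℝ)) ≤ 1 := max_le zero_le_one (by linarith)
    have h1 := isHomeomorph_LL φ0 φ1 hc0 hc1 hm0 hm1 htop0 hbot0 htop1 hbot1 ha0 ha1
    have h2 := isHomeomorph_GG g hg0 hg1 hb0 hb1
    exact h1.comp h2
end
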